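/- arXiv:2006.13787 — 3 statements merged into one kernel-verified Lean document; each statement's English description precedes it below -/
import Mathlib

section
/- Let S be an inverse semigroup with zero, K a commutative unital ring, and a = Σ a_s s an element of the contracted semigroup algebra K₀S. The following are equivalent: (S) for every non-zero t ∈ S there exists a non-zero u ≤ t with Σ_{s ≥ u} a_s = 0; (R) for every non-zero idempotent e there exists a non-zero idempotent f ≤ e with a f = 0; (L) for every non-zero idempotent e there exists a non-zero idempotent f ≤ e with f a = 0. -/
/-- An inverse semigroup with zero. -/
class InverseSemigroup0 (S : Type*) extends Semigroup S, Zero S, Star S where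
  zero_mul : ∀ s : S, 0 * s = 0
  mul_zero : ∀ s : S, s * 0 = 0
  mul_star_mul_self : ∀ s : S, s * star s * s = s
  star_mul_self_star : ∀ s : S, star s * s * star s = star s
  star_unique : ∀ s t : S, s * t * s = s → t * s * t = t → t = star s

/-- The natural partial order on an inverse semigroup. -/
def NatLe {S : Type*} [InverseSemigroup0 S] (a b : S) : Prop := a = b * star a * a

namespace IS0
variable {S : Type*} [InverseSemigroup0 S]

open InverseSemigroup0

lemma mss (s : S) : s * star s * s = s := mul_star_mul_self s
lemma sms (s : S) : star s * s * star s = star s := star_mul_self_star s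
lemma zmul (s : S) : (0 : S) * s = 0 := InverseSemigroup0.zero_mul s
lemma mulz (s : S) : s * (0 : S) = 0 := InverseSemigroup0.mul_zero s

lemma star_star (s : S) : star (star s) = s :=
  (star_unique (star s) s (sms s) (mss s)).symm

lemma star_idem {e : S} (he : IsIdempotentElem e) : star e = e :=
  (star_unique e e (by rw [he, he]) (by rw [he, he])).symm

lemma idem_star_mul (s : S) : IsIdempotentElem (star s * s) := by
  show star s * s * (star s * s) = star s * s
  calc star s * s * (star s * s) = star s * (s * star s * s) := by
        simp only [mul_assoc]
      _ = star s * s := by rw [mss]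

lemma idem_mul_star (s : S) : IsIdempotentElem (s * star s) := by
  show s * star s * (s * star s) = s * star s
  calc s * star s * (s * star s) = s * star s * s * star s := by simp only [mul_assoc]
    _ = s * star s := by rw [mss]

/-- key: idempotents commute -/
lemma idem_comm {e f : S} (he : IsIdempotentElem e) (hf : IsIdempotentElem f) :
    e * f = f * e := by
  -- star (e*f) = f * star (e*f) * e and is idempotent
  set a := star (e * f) with ha
  have h1 : e * f * (f * a * e) * (e * f) = e * f := by
    have : e * f * (f * a * e) * (e * f) = e * (f * a * e) * f := by
      have hf' : f * (f * a * e) = f * a * e := by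
        simp only [← mul_assoc]; rw [hf]
      have he' : (f * a * e) * e = f * a * e := by
        simp only [mul_assoc]; rw [he]
      calc e * f * (f * a * e) * (e * f) = e * (f * (f * a * e)) * (e * f) := by
            simp only [mul_assoc]
        _ = e * (f * a * e) * (e * f) := by rw [hf']
        _ = e * ((f * a * e) * e) * f := by simp only [mul_assoc]
        _ = e * (f * a * e) * f := by rw [he']
    rw [this]
    calc e * (f * a * e) * f = e * f * a * (e * f) := by simp only [mul_assoc]
      _ = e * f := by rw [ha, mss]
  have h2 : (f * a * e) * (e * f) * (f * a * e) = f * a * e := by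
    calc (f * a * e) * (e * f) * (f * a * e)
        = f * a * (e * e) * (f * f) * (a * e) := by simp only [mul_assoc]
      _ = f * a * e * f * (a * e) := by rw [he, hf]
      _ = f * (a * (e * f) * a) * e := by simp only [mul_assoc]
      _ = f * a * e := by rw [ha, sms]
  have ha2 : f * a * e = a := star_unique _ _ h1 h2
  have haidem : IsIdempotentElem a := by
    show a * a = a
    conv_lhs => rw [← ha2]
    calc f * a * e * (f * a * e) = f * (a * (e * f) * a) * e := by simp only [mul_assoc]
      _ = f * a * e := by rw [ha, sms]
      _ = a := ha2
  have hef : e * f = a := by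
    rw [← star_idem haidem, ha, star_star]
  -- similarly f * e = star (f * e) and is idempotent; show f*e is inverse of e*f
  have hefidem : IsIdempotentElem (e * f) := hef ▸ haidem
  -- symmetric argument for f*e
  have hfeidem : IsIdempotentElem (f * e) := by
    set b := star (f * e) with hb
    have h1 : f * e * (e * b * f) * (f * e) = f * e := by
      have : f * e * (e * b * f) * (f * e) = f * (e * b * f) * e := by
        have he' : e * (e * b * f) = e * b * f := by
          simp only [← mul_assoc]; rw [he]
        have hf' : (e * b * f) * f = e * b * f := by
          simp only [mul_assoc]; rw [hf]
        calc f * e * (e * b * f) * (f * e) = f * (e * (e * b * f)) * (f * e) := by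
              simp only [mul_assoc]
          _ = f * (e * b * f) * (f * e) := by rw [he']
          _ = f * ((e * b * f) * f) * e := by simp only [mul_assoc]
          _ = f * (e * b * f) * e := by rw [hf']
      rw [this]
      calc f * (e * b * f) * e = f * e * b * (f * e) := by simp only [mul_assoc]
        _ = f * e := by rw [hb, mss]
    have h2 : (e * b * f) * (f * e) * (e * b * f) = e * b * f := by
      calc (e * b * f) * (f * e) * (e * b * f)
          = e * b * (f * f) * (e * e) * (b * f) := by simp only [mul_assoc]
        _ = e * b * f * e * (b * f) := by rw [he, hf]
        _ = e * (b * (f * e) * b) * f := by simp only [mul_assoc]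
        _ = e * b * f := by rw [hb, sms]
    have hb2 : e * b * f = b := star_unique _ _ h1 h2
    have hbidem : IsIdempotentElem b := by
      show b * b = b
      conv_lhs => rw [← hb2]
      calc e * b * f * (e * b * f) = e * (b * (f * e) * b) * f := by simp only [mul_assoc]
        _ = e * b * f := by rw [hb, sms]
        _ = b := hb2
    have : f * e = b := by
      rw [← star_idem hbidem, hb, star_star]
    exact this ▸ hbidem
  -- now f*e is inverse of e*f:
  have key1 : (e * f) * (f * e) * (e * f) = e * f := by
    calc (e * f) * (f * e) * (e * f) = e * (f * f) * (e * e) * f := by simp only [mul_assoc]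
      _ = e * f * (e * f) := by rw [he, hf]; simp only [mul_assoc]
      _ = e * f := hefidem
  have key2 : (f * e) * (e * f) * (f * e) = f * e := by
    calc (f * e) * (e * f) * (f * e) = f * (e * e) * (f * f) * e := by simp only [mul_assoc]
      _ = f * e * (f * e) := by rw [he, hf]; simp only [mul_assoc]
      _ = f * e := hfeidem
  have := star_unique (e * f) (f * e) key1 key2
  rw [this, star_idem hefidem]

lemma star_mul (s t : S) : star (s * t) = star t * star s := by
  symm
  apply star_unique
  · calc s * t * (star t * star s) * (s * t)
        = s * (t * star t) * (star s * s) * t := by simp only [mul_assoc]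
      _ = s * ((t * star t) * (star s * s)) * t := by simp only [mul_assoc]
      _ = s * ((star s * s) * (t * star t)) * t := by
          rw [idem_comm (idem_mul_star t) (idem_star_mul s)]
      _ = (s * star s * s) * (t * star t * t) := by simp only [mul_assoc]
      _ = s * t := by rw [mss, mss]
  · calc star t * star s * (s * t) * (star t * star s)
        = star t * (star s * s) * (t * star t) * star s := by simp only [mul_assoc]
      _ = star t * ((star s * s) * (t * star t)) * star s := by simp only [mul_assoc]
      _ = star t * ((t * star t) * (star s * s)) * star s := by
          rw [idem_comm (idem_star_mul s) (idem_mul_star t)]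
      _ = (star t * t * star t) * (star s * s * star s) := by simp only [mul_assoc]
      _ = star t * star s := by rw [sms, sms]

lemma star_zero : star (0 : S) = (0 : S) := by
  symm
  apply star_unique <;> rw [zmul, zmul]

lemma eq_zero_of_star_mul_self {s : S} (h : star s * s = 0) : s = 0 := by
  have := mss s
  rw [mul_assoc, h, mulz] at this
  exact this.symm

lemma eq_zero_of_mul_star_self {s : S} (h : s * star s = 0) : s = 0 := by
  have := mss s
  rw [h, zmul] at this
  exact this.symm


lemma idem_mul {e f : S} (he : IsIdempotentElem e) (hf : IsIdempotentElem f) :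
    IsIdempotentElem (e * f) := by
  show e * f * (e * f) = e * f
  calc e * f * (e * f) = e * (f * e) * f := by simp only [mul_assoc]
    _ = e * (e * f) * f := by rw [idem_comm hf he]
    _ = (e * e) * (f * f) := by simp only [mul_assoc]
    _ = e * f := by rw [he, hf]

/-- For idempotents, the natural order is divisibility. -/
lemma natle_idem_iff {e f : S} (_he : IsIdempotentElem e) (hf : IsIdempotentElem f) :
    NatLe f e ↔ f = e * f := by
  unfold NatLe
  rw [star_idem hf, mul_assoc, hf]

lemma natle_iff_right {u t : S} : NatLe u t ↔ u = t * (star u * u) := by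
  unfold NatLe; rw [mul_assoc]

lemma natle_left_iff {u t : S} : NatLe u t ↔ u = (u * star u) * t := by
  constructor
  · intro h
    have h' : u = t * (star u * u) := natle_iff_right.1 h
    have hsu : star u = (star u * u) * star t := by
      conv_lhs => rw [h', star_mul, star_idem (idem_star_mul u)]
    have e1 : u * star u = u * ((star u * u) * star t) := by rw [← hsu]
    have e2 : u * ((star u * u) * star t) = (t * (star u * u)) * ((star u * u) * star t) := by
      rw [← h']
    have h1 : u * star u = t * (star u * u) * star t := by
      rw [e1, e2]
      calc t * (star u * u) * ((star u * u) * star t)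
          = t * ((star u * u) * (star u * u)) * star t := by simp only [mul_assoc]
        _ = t * (star u * u) * star t := by rw [idem_star_mul u]
    calc u = t * (star u * u) := h'
      _ = (t * star t * t) * (star u * u) := by rw [mss]
      _ = t * ((star t * t) * (star u * u)) := by simp only [mul_assoc]
      _ = t * ((star u * u) * (star t * t)) := by
          rw [idem_comm (idem_star_mul t) (idem_star_mul u)]
      _ = (t * (star u * u) * star t) * t := by simp only [mul_assoc]
      _ = (u * star u) * t := by rw [← h1]
  · intro h
    rw [natle_iff_right]
    have hsu : star u = star t * (u * star u) := by
      conv_lhs => rw [h, star_mul, star_idem (idem_mul_star u)]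
    have e1 : star u * u = (star t * (u * star u)) * u := by rw [← hsu]
    have e2 : (star t * (u * star u)) * u = (star t * (u * star u)) * ((u * star u) * t) := by
      rw [← h]
    have h1 : star u * u = star t * (u * star u) * t := by
      rw [e1, e2]
      calc star t * (u * star u) * ((u * star u) * t)
          = star t * ((u * star u) * (u * star u)) * t := by simp only [mul_assoc]
        _ = star t * (u * star u) * t := by rw [idem_mul_star u]
    symm
    calc t * (star u * u)
        = t * (star t * (u * star u) * t) := by rw [h1]
      _ = ((t * star t) * (u * star u)) * t := by simp only [mul_assoc]
      _ = ((u * star u) * (t * star t)) * t := by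
          rw [idem_comm (idem_mul_star t) (idem_mul_star u)]
      _ = (u * star u) * (t * star t * t) := by simp only [mul_assoc]
      _ = (u * star u) * t := by rw [mss]
      _ = u := h.symm

lemma natle_trans {u v t : S} (huv : NatLe u v) (hvt : NatLe v t) : NatLe u t := by
  have h1 : u = v * (star u * u) := natle_iff_right.1 huv
  have h2 : v = t * (star v * v) := natle_iff_right.1 hvt
  have hsu : star u = (star u * u) * star v := by
    conv_lhs => rw [h1, star_mul, star_idem (idem_star_mul u)]
  have key : star u * u = (star v * v) * (star u * u) := by
    have e1 : star u * u = star u * (v * (star u * u)) := by rw [← h1]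
    have e2 : star u * (v * (star u * u)) = ((star u * u) * star v) * (v * (star u * u)) := by
      rw [← hsu]
    have e3 : (star u * u) * star v * (v * (star u * u)) = (star v * v) * (star u * u) :=
      calc (star u * u) * star v * (v * (star u * u))
          = (star u * u) * ((star v * v) * (star u * u)) := by simp only [mul_assoc]
        _ = (star u * u) * ((star u * u) * (star v * v)) := by
            rw [idem_comm (idem_star_mul v) (idem_star_mul u)]
        _ = ((star u * u) * (star u * u)) * (star v * v) := by simp only [mul_assoc]
        _ = (star u * u) * (star v * v) := by rw [idem_star_mul u]
        _ = (star v * v) * (star u * u) := idem_comm (idem_star_mul u) (idem_star_mul v)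
    conv_lhs => rw [e1, e2, e3]
  rw [natle_iff_right]
  calc u = v * (star u * u) := h1
    _ = (t * (star v * v)) * (star u * u) := by rw [← h2]
    _ = t * ((star v * v) * (star u * u)) := by simp only [mul_assoc]
    _ = t * (star u * u) := by rw [← key]

/-- `v * f ≤ v` for any idempotent `f`. -/
lemma natle_mul_idem (v : S) {f : S} (hf : IsIdempotentElem f) : NatLe (v * f) v := by
  rw [natle_iff_right]
  have h1 : star (v * f) * (v * f) = (star v * v) * f := by
    rw [star_mul, star_idem hf]
    calc f * star v * (v * f) = f * ((star v * v) * f) := by simp only [mul_assoc]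
      _ = f * (f * (star v * v)) := by rw [idem_comm (idem_star_mul v) hf]
      _ = (f * f) * (star v * v) := by simp only [mul_assoc]
      _ = f * (star v * v) := by rw [hf]
      _ = (star v * v) * f := idem_comm hf (idem_star_mul v)
  rw [h1, ← mul_assoc, ← mul_assoc, mss]

/-- `f * v ≤ v` for any idempotent `f`. -/
lemma natle_idem_mul (v : S) {f : S} (hf : IsIdempotentElem f) : NatLe (f * v) v := by
  rw [natle_left_iff]
  have h1 : (f * v) * star (f * v) = f * (v * star v) := by
    rw [star_mul, star_idem hf]
    calc f * v * (star v * f) = f * ((v * star v) * f) := by simp only [mul_assoc]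
      _ = f * (f * (v * star v)) := by rw [idem_comm (idem_mul_star v) hf]
      _ = (f * f) * (v * star v) := by simp only [mul_assoc]
      _ = f * (v * star v) := by rw [hf]
  rw [h1, mul_assoc, mul_assoc, ← mul_assoc v, mss]

/-- domain idempotent of `s * f` when `f` is idempotent under `s* s`. -/
lemma star_mul_self_of_under {s f : S} (hf : IsIdempotentElem f)
    (h : f * (star s * s) = f) : star (s * f) * (s * f) = f := by
  rw [star_mul, star_idem hf]
  calc f * star s * (s * f) = f * ((star s * s) * f) := by simp only [mul_assoc]
    _ = (f * (star s * s)) * f := by simp only [mul_assoc]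
    _ = f * f := by rw [h]
    _ = f := hf

/-- range idempotent of `f * s` when `f` is idempotent under `s s*`. -/
lemma mul_star_self_of_under {s f : S} (hf : IsIdempotentElem f)
    (h : (s * star s) * f = f) : (f * s) * star (f * s) = f := by
  rw [star_mul, star_idem hf]
  calc f * s * (star s * f) = f * ((s * star s) * f) := by simp only [mul_assoc]
    _ = f * f := by rw [h]
    _ = f := hf

end IS0

variable (K S : Type*) [CommRing K] [InverseSemigroup0 S]

/-- The ring congruence on the semigroup algebra identifying the zero of `S`
with the zero of the algebra. -/
noncomputable def contractedCon : RingCon (MonoidAlgebra K S) :=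
  ringConGen (fun a b => a = MonoidAlgebra.single (0 : S) (1 : K) ∧ b = 0)

/-- The contracted semigroup algebra `K₀S`: the `K`-algebra with basis `S \ {0}`
and multiplication extending that of `S`, realized as the quotient of the semigroup
algebra of `S` by the span of the zero of `S`. -/
abbrev Kzero := (contractedCon K S).Quotient

/-- The quotient map onto the contracted semigroup algebra. -/
noncomputable def mk0 (a : MonoidAlgebra K S) : Kzero K S :=
  (a : (contractedCon K S).Quotient)

/-- The canonical map `S → K₀S`. -/
noncomputable def iota (s : S) : Kzero K S := mk0 K S (MonoidAlgebra.single s 1)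

/-- An element of `K₀S` is singular if for every non-zero idempotent `e` there is a
non-zero idempotent `f ≤ e` with `a f = 0`. -/
noncomputable def Singular (x : Kzero K S) : Prop :=
  ∀ e : S, IsIdempotentElem e → e ≠ 0 →
    ∃ f : S, IsIdempotentElem f ∧ f ≠ 0 ∧ NatLe f e ∧ x * iota K S f = 0

/-- `J` is a two-sided ideal of the (non-unital) ring `K₀S`. -/
def IsIdealSet (J : Set (Kzero K S)) : Prop :=
  (0 : Kzero K S) ∈ J ∧ (∀ a ∈ J, ∀ b ∈ J, a + b ∈ J) ∧ (∀ a ∈ J, -a ∈ J) ∧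
    ∀ a ∈ J, ∀ x : Kzero K S, x * a ∈ J ∧ a * x ∈ J

/-- The element of the semigroup algebra with coefficient function `b`. -/
noncomputable def toMA (b : S →₀ K) : MonoidAlgebra K S :=
  b.sum fun s c => MonoidAlgebra.single s c

namespace IS0
variable {K S}

lemma toMA_eq (b : S →₀ K) : toMA K S b = MonoidAlgebra.ofCoeff b := by
  conv_rhs => rw [← Finsupp.sum_single b]
  rw [MonoidAlgebra.ofCoeff_finsuppSum]; rfl

lemma mul_apply_zero_right (x z : MonoidAlgebra K S) (hz : ∀ s : S, s ≠ 0 → z.coeff s = 0)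
    (t : S) (ht : t ≠ 0) : (x * z).coeff t = 0 := by
  classical
  rw [MonoidAlgebra.mul_apply]
  apply Finset.sum_eq_zero
  intro a _
  apply Finset.sum_eq_zero
  intro c hc
  have hc0 : c = 0 := by
    by_contra h
    exact (Finsupp.mem_support_iff.1 hc) (hz c h)
  dsimp only
  rw [if_neg]
  rw [hc0, mulz]
  exact Ne.symm ht

lemma mul_apply_zero_left (x z : MonoidAlgebra K S) (hz : ∀ s : S, s ≠ 0 → z.coeff s = 0)
    (t : S) (ht : t ≠ 0) : (z * x).coeff t = 0 := by
  classical
  rw [MonoidAlgebra.mul_apply]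
  apply Finset.sum_eq_zero
  intro c hc
  have hc0 : c = 0 := by
    by_contra h
    exact (Finsupp.mem_support_iff.1 hc) (hz c h)
  apply Finset.sum_eq_zero
  intro a _
  dsimp only
  rw [if_neg]
  rw [hc0, zmul]
  exact Ne.symm ht

lemma contractedCon_iff (x y : MonoidAlgebra K S) :
    contractedCon K S x y ↔ ∀ s : S, s ≠ 0 → x.coeff s = y.coeff s := by
  classical
  constructor
  · intro h
    have h' : RingConGen.Rel
        (fun a b => a = MonoidAlgebra.single (0 : S) (1 : K) ∧ b = 0) x y := h
    clear h
    induction h' with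
    | of a b hab =>
        rcases hab with ⟨rfl, rfl⟩
        intro s hs
        rw [MonoidAlgebra.single_apply, if_neg (Ne.symm hs)]
        rfl
    | refl a => intro s _; rfl
    | symm _ ih => intro s hs; exact (ih s hs).symm
    | trans _ _ ih1 ih2 => intro s hs; exact (ih1 s hs).trans (ih2 s hs)
    | add h1 h2 ih1 ih2 =>
        rename_i p q u v
        intro s hs
        show p.coeff s + u.coeff s = q.coeff s + v.coeff s
        rw [ih1 s hs, ih2 s hs]
    | mul hab hcd ih1 ih2 =>
        rename_i a b c d
        intro s hs
        have key : a * c - b * d = a * (c - d) + (a - b) * d := by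
          rw [mul_sub, sub_mul]
          abel
        have h1 : (a * (c - d)).coeff s = 0 :=
          mul_apply_zero_right a (c - d) (fun u hu => by
            show c.coeff u - d.coeff u = 0
            rw [ih2 u hu, sub_self]) s hs
        have h2 : ((a - b) * d).coeff s = 0 :=
          mul_apply_zero_left d (a - b) (fun u hu => by
            show a.coeff u - b.coeff u = 0
            rw [ih1 u hu, sub_self]) s hs
        have : (a * c - b * d).coeff s = 0 := by
          rw [key]
          show (a * (c - d)).coeff s + ((a - b) * d).coeff s = 0
          rw [h1, h2, add_zero]
        have := sub_eq_zero.mp (show (a * c).coeff s - (b * d).coeff s = 0 from this)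
        exact this
  · intro h
    have base : RingConGen.Rel
        (fun a b => a = MonoidAlgebra.single (0 : S) (1 : K) ∧ b = 0)
        (MonoidAlgebra.single (0 : S) (1 : K)) 0 := RingConGen.Rel.of _ _ ⟨rfl, rfl⟩
    set c : K := x.coeff 0 - y.coeff 0 with hc
    have hsingle : MonoidAlgebra.single (0 : S) c * MonoidAlgebra.single (0 : S) (1 : K)
        = MonoidAlgebra.single (0 : S) c := by
      rw [MonoidAlgebra.single_mul_single, mulz, mul_one]
    have hz : MonoidAlgebra.single (0 : S) c * (0 : MonoidAlgebra K S) = 0 := mul_zero _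
    have hrel : RingConGen.Rel
        (fun a b => a = MonoidAlgebra.single (0 : S) (1 : K) ∧ b = 0)
        (MonoidAlgebra.single (0 : S) c) 0 := by
      have := RingConGen.Rel.mul (RingConGen.Rel.refl (MonoidAlgebra.single (0 : S) c)) base
      rwa [hsingle, hz] at this
    have hx : x = MonoidAlgebra.single (0 : S) c + y := by
      ext s
      show x.coeff s = (MonoidAlgebra.single (0 : S) c).coeff s + y.coeff s
      by_cases hs : s = 0
      · subst hs
        rw [MonoidAlgebra.single_apply, if_pos rfl, hc]
        ring
      · rw [MonoidAlgebra.single_apply, if_neg (Ne.symm hs), h s hs, zero_add]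
    show RingConGen.Rel _ x y
    have := RingConGen.Rel.add hrel (RingConGen.Rel.refl y)
    rwa [zero_add, ← hx] at this

lemma mk0_eq_zero_iff (x : MonoidAlgebra K S) :
    mk0 K S x = 0 ↔ ∀ s : S, s ≠ 0 → x.coeff s = 0 := by
  have : (0 : Kzero K S) = mk0 K S 0 := (RingCon.coe_zero _).symm
  rw [this, mk0, mk0, RingCon.eq, contractedCon_iff]
  constructor
  · intro h s hs
    exact h s hs
  · intro h s hs
    exact h s hs

open Classical in
lemma mul_single_coeff (b : S →₀ K) (f t : S) :
    (toMA K S b * MonoidAlgebra.single f 1 : MonoidAlgebra K S).coeff t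
      = ∑ s ∈ b.support.filter (fun s => s * f = t), b s := by
  classical
  rw [toMA_eq, MonoidAlgebra.mul_apply]
  rw [MonoidAlgebra.coeff_ofCoeff, MonoidAlgebra.coeff_single]
  rw [Finset.sum_filter]
  apply Finset.sum_congr rfl
  intro a _
  dsimp only
  rw [Finsupp.sum_single_index (by simp)]
  simp [mul_one]

open Classical in
lemma single_mul_coeff (b : S →₀ K) (f t : S) :
    (MonoidAlgebra.single f 1 * toMA K S b : MonoidAlgebra K S).coeff t
      = ∑ s ∈ b.support.filter (fun s => f * s = t), b s := by
  classical
  rw [toMA_eq, MonoidAlgebra.mul_apply, MonoidAlgebra.coeff_ofCoeff, MonoidAlgebra.coeff_single,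
    Finsupp.sum_single_index (by simp)]
  rw [Finset.sum_filter]
  apply Finset.sum_congr rfl
  intro a _
  simp [one_mul]

open Classical in
lemma mk0_mul_iota_eq_zero_iff (b : S →₀ K) (f : S) :
    mk0 K S (toMA K S b) * iota K S f = 0 ↔
      ∀ t : S, t ≠ 0 → (∑ s ∈ b.support.filter (fun s => s * f = t), b s) = 0 := by
  classical
  have : mk0 K S (toMA K S b) * iota K S f
      = mk0 K S (toMA K S b * MonoidAlgebra.single f 1) := rfl
  rw [this, mk0_eq_zero_iff]
  constructor
  · intro h t ht; rw [← mul_single_coeff b f t]; exact h t ht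
  · intro h t ht; rw [mul_single_coeff b f t]; exact h t ht

open Classical in
lemma iota_mul_mk0_eq_zero_iff (b : S →₀ K) (f : S) :
    iota K S f * mk0 K S (toMA K S b) = 0 ↔
      ∀ t : S, t ≠ 0 → (∑ s ∈ b.support.filter (fun s => f * s = t), b s) = 0 := by
  classical
  have : iota K S f * mk0 K S (toMA K S b)
      = mk0 K S (MonoidAlgebra.single f 1 * toMA K S b) := rfl
  rw [this, mk0_eq_zero_iff]
  constructor
  · intro h t ht; rw [← single_mul_coeff b f t]; exact h t ht
  · intro h t ht; rw [single_mul_coeff b f t]; exact h t ht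

end IS0

namespace IS0
variable {K S : Type*} [CommRing K] [InverseSemigroup0 S]

omit [CommRing K] in
lemma natle_refl_idem {e : S} (he : IsIdempotentElem e) : NatLe e e :=
  (natle_idem_iff he he).2 he.symm

omit [CommRing K] in
lemma hsu_of_natle {u v : S} (h : NatLe u v) : star u = (star u * u) * star v := by
  conv_lhs => rw [natle_iff_right.1 h, star_mul, star_idem (idem_star_mul u)]

omit [CommRing K] in
lemma dom_absorb {u v : S} (h : NatLe u v) : (star v * v) * (star u * u) = star u * u := by
  have h1 : u = v * (star u * u) := natle_iff_right.1 h
  have hsu := hsu_of_natle h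
  have e1 : star u * u = star u * (v * (star u * u)) := by rw [← h1]
  have e2 : star u * (v * (star u * u)) = ((star u * u) * star v) * (v * (star u * u)) := by
    rw [← hsu]
  have e3 : (star u * u) * star v * (v * (star u * u)) = (star v * v) * (star u * u) :=
    calc (star u * u) * star v * (v * (star u * u))
        = (star u * u) * ((star v * v) * (star u * u)) := by simp only [mul_assoc]
      _ = (star u * u) * ((star u * u) * (star v * v)) := by
          rw [idem_comm (idem_star_mul v) (idem_star_mul u)]
      _ = ((star u * u) * (star u * u)) * (star v * v) := by simp only [mul_assoc]
      _ = (star u * u) * (star v * v) := by rw [idem_star_mul u]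
      _ = (star v * v) * (star u * u) := idem_comm (idem_star_mul u) (idem_star_mul v)
  conv_rhs => rw [e1, e2, e3]

omit [CommRing K] in
lemma natle_star {u v : S} (h : NatLe u v) : NatLe (star u) (star v) := by
  rw [natle_left_iff, star_star]
  exact hsu_of_natle h

omit [CommRing K] in
lemma ran_absorb {u v : S} (h : NatLe u v) : (v * star v) * (u * star u) = u * star u := by
  have := dom_absorb (natle_star h)
  rwa [star_star, star_star] at this

omit [CommRing K] in
lemma mul_idem_ne_zero {s f : S} (hf : IsIdempotentElem f) (hf0 : f ≠ 0)
    (h : f * (star s * s) = f) : s * f ≠ 0 := by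
  intro h0
  apply hf0
  have := star_mul_self_of_under hf h
  rw [h0, star_zero, zmul] at this
  exact this.symm

omit [CommRing K] in
lemma idem_mul_ne_zero {s f : S} (hf : IsIdempotentElem f) (hf0 : f ≠ 0)
    (h : (s * star s) * f = f) : f * s ≠ 0 := by
  intro h0
  apply hf0
  have := mul_star_self_of_under hf h
  rw [h0, star_zero, mulz] at this
  exact this.symm

omit [CommRing K] [InverseSemigroup0 S] in
lemma sum_image_le_nat {α β : Type*} [DecidableEq β] (s : Finset α) (g : α → β) (h : β → ℕ) :
    ∑ w ∈ s.image g, h w ≤ ∑ a ∈ s, h (g a) := by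
  classical
  induction s using Finset.induction_on with
  | empty => simp
  | insert a s hx ih =>
      rw [Finset.sum_insert hx, Finset.image_insert]
      by_cases hga : g a ∈ s.image g
      · rw [Finset.insert_eq_self.2 hga]
        exact le_trans ih (Nat.le_add_left _ _)
      · rw [Finset.sum_insert hga]
        exact Nat.add_le_add (le_refl _) ih

section Core
open Classical
variable (b : S →₀ K)

noncomputable def upf (u : S) : Finset S := b.support.filter (fun s => NatLe u s)

def CondS : Prop := ∀ t : S, t ≠ 0 →
  ∃ u : S, u ≠ 0 ∧ NatLe u t ∧ (∑ s ∈ upf b u, b s) = 0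

lemma upf_mono {u v : S} (h : NatLe u v) : upf b v ⊆ upf b u := by
  intro s hs
  rw [upf, Finset.mem_filter] at hs ⊢
  exact ⟨hs.1, natle_trans h hs.2⟩

/-- `f` is a "good" idempotent under `e` (right version). -/
def GoodR (e f : S) : Prop := IsIdempotentElem f ∧ f ≠ 0 ∧ NatLe f e ∧
  ∀ s ∈ b.support, (star s * s) * f = 0 ∨ f * (star s * s) = f

noncomputable def ValsR (f : S) : Finset S :=
  (b.support.filter (fun s => f * (star s * s) = f)).image (fun s => s * f)

noncomputable def PhiR (f : S) : ℕ :=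
  ∑ v ∈ ValsR b f, (b.support.card - (upf b v).card)

lemma exists_goodR {e : S} (he : IsIdempotentElem e) (he0 : e ≠ 0) :
    ∃ f, GoodR b e f := by
  suffices h : ∀ T : Finset S, ∃ f : S, IsIdempotentElem f ∧ f ≠ 0 ∧ NatLe f e ∧
      ∀ s ∈ T, (star s * s) * f = 0 ∨ f * (star s * s) = f by
    obtain ⟨f, h1, h2, h3, h4⟩ := h b.support
    exact ⟨f, h1, h2, h3, h4⟩
  intro T
  induction T using Finset.induction_on with
  | empty => exact ⟨e, he, he0, natle_refl_idem he, by simp⟩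
  | insert a T hx ih =>
      obtain ⟨f, hf, hf0, hfe, hT⟩ := ih
      by_cases h0 : (star a * a) * f = 0
      · refine ⟨f, hf, hf0, hfe, ?_⟩
        intro s hs
        rcases Finset.mem_insert.1 hs with rfl | hs
        · exact Or.inl h0
        · exact hT s hs
      · set g := star a * a with hg
        have hgI : IsIdempotentElem g := idem_star_mul a
        refine ⟨g * f, idem_mul hgI hf, h0, ?_, ?_⟩
        · rw [natle_idem_iff he (idem_mul hgI hf)]
          have hfe' : f = e * f := (natle_idem_iff he hf).1 hfe
          calc g * f = g * (e * f) := by rw [← hfe']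
            _ = (g * e) * f := by simp only [mul_assoc]
            _ = (e * g) * f := by rw [idem_comm hgI he]
            _ = e * (g * f) := by simp only [mul_assoc]
        · intro s hs
          rcases Finset.mem_insert.1 hs with rfl | hs
          · right
            calc (g * f) * (star s * s) = (g * f) * g := rfl
              _ = g * (f * g) := by simp only [mul_assoc]
              _ = g * (g * f) := by rw [idem_comm hf hgI]
              _ = (g * g) * f := by simp only [mul_assoc]
              _ = g * f := by rw [hgI]
          · rcases hT s hs with h | h
            · left
              calc (star s * s) * (g * f) = ((star s * s) * g) * f := by simp only [mul_assoc]
                _ = (g * (star s * s)) * f := by rw [idem_comm hgI (idem_star_mul s)]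
                _ = g * ((star s * s) * f) := by simp only [mul_assoc]
                _ = 0 := by rw [h, mulz]
            · right
              calc (g * f) * (star s * s) = g * (f * (star s * s)) := by simp only [mul_assoc]
                _ = g * f := by rw [h]

lemma shrinkR (hS : CondS b) {e f : S} (he : IsIdempotentElem e) (hG : GoodR b e f)
    {v : S} (hv : v ∈ ValsR b f) (hsum : (∑ s ∈ upf b v, b s) ≠ 0) :
    ∃ f', GoodR b e f' ∧ PhiR b f' < PhiR b f := by
  obtain ⟨hf, hf0, hfe, hT⟩ := hG
  rw [ValsR, Finset.mem_image] at hv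
  obtain ⟨s₀, hs₀, hvdef⟩ := hv
  rw [Finset.mem_filter] at hs₀
  subst hvdef
  set v := s₀ * f with hvdef
  have hvv : star v * v = f := star_mul_self_of_under hf hs₀.2
  have hv0 : v ≠ 0 := mul_idem_ne_zero hf hf0 hs₀.2
  obtain ⟨u, hu0, huv, husum⟩ := hS v hv0
  set F := star u * u with hF
  have hFI : IsIdempotentElem F := idem_star_mul u
  have hF0 : F ≠ 0 := fun h => hu0 (eq_zero_of_star_mul_self h)
  have hfF : f * F = F := by rw [hF, ← hvv]; exact dom_absorb huv
  have hFf : F * f = F := by rw [idem_comm hFI hf]; exact hfF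
  have hfe' : f = e * f := (natle_idem_iff he hf).1 hfe
  have hFe : NatLe F e := by
    rw [natle_idem_iff he hFI]
    have : e * F = F :=
      calc e * F = e * (f * F) := by rw [hfF]
        _ = (e * f) * F := by simp only [mul_assoc]
        _ = f * F := by rw [← hfe']
        _ = F := hfF
    exact this.symm
  have hGF : GoodR b e F := by
    refine ⟨hFI, hF0, hFe, ?_⟩
    intro s hs
    rcases hT s hs with h | h
    · left
      calc (star s * s) * F = (star s * s) * (f * F) := by rw [hfF]
        _ = ((star s * s) * f) * F := by simp only [mul_assoc]
        _ = 0 := by rw [h, zmul]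
    · right
      calc F * (star s * s) = (F * f) * (star s * s) := by rw [hFf]
        _ = F * (f * (star s * s)) := by simp only [mul_assoc]
        _ = F * f := by rw [h]
        _ = F := hFf
  have hu_eq : v * F = u := by rw [hF]; exact (natle_iff_right.1 huv).symm
  have hmap : ∀ w ∈ ValsR b F, ∃ v₁ ∈ ValsR b f, w = v₁ * F := by
    intro w hw
    rw [ValsR, Finset.mem_image] at hw
    obtain ⟨s, hs, rfl⟩ := hw
    rw [Finset.mem_filter] at hs
    obtain ⟨hsT, hsF⟩ := hs
    have hsf : f * (star s * s) = f := by
      rcases hT s hsT with h | h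
      · exfalso
        apply hF0
        have hz : F * (star s * s) = 0 :=
          calc F * (star s * s) = (F * f) * (star s * s) := by rw [hFf]
            _ = F * (f * (star s * s)) := by simp only [mul_assoc]
            _ = F * ((star s * s) * f) := by rw [idem_comm hf (idem_star_mul s)]
            _ = F * (((star s * s) * f)) := rfl
            _ = F * 0 := by rw [h]
            _ = 0 := mulz F
        rw [← hsF, hz]
      · exact h
    refine ⟨s * f, ?_, ?_⟩
    · rw [ValsR, Finset.mem_image]
      exact ⟨s, Finset.mem_filter.2 ⟨hsT, hsf⟩, rfl⟩
    · calc s * F = s * (f * F) := by rw [hfF]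
        _ = (s * f) * F := by simp only [mul_assoc]
  have hsub : ValsR b F ⊆ (ValsR b f).image (fun v₁ => v₁ * F) := by
    intro w hw
    obtain ⟨v₁, hv₁, rfl⟩ := hmap w hw
    exact Finset.mem_image_of_mem _ hv₁
  have hpt : ∀ v₁ : S, b.support.card - (upf b (v₁ * F)).card
      ≤ b.support.card - (upf b v₁).card := by
    intro v₁
    have h1 : upf b v₁ ⊆ upf b (v₁ * F) := upf_mono b (natle_mul_idem v₁ hFI)
    have := Finset.card_le_card h1
    omega
  have hvmem : v ∈ ValsR b f := by
    rw [ValsR, Finset.mem_image]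
    exact ⟨s₀, Finset.mem_filter.2 hs₀, rfl⟩
  have hstrict : b.support.card - (upf b (v * F)).card
      < b.support.card - (upf b v).card := by
    rw [hu_eq]
    have h1 : upf b v ⊆ upf b u := upf_mono b huv
    have h2 : upf b v ≠ upf b u := by
      intro h
      rw [h] at hsum
      exact hsum husum
    have h3 := Finset.card_lt_card (h1.ssubset_of_ne h2)
    have h4 : (upf b u).card ≤ b.support.card :=
      Finset.card_le_card (Finset.filter_subset _ _)
    omega
  refine ⟨F, hGF, ?_⟩
  calc PhiR b F
      ≤ ∑ w ∈ (ValsR b f).image (fun v₁ => v₁ * F), (b.support.card - (upf b w).card) :=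
        Finset.sum_le_sum_of_subset hsub
    _ ≤ ∑ v₁ ∈ ValsR b f, (b.support.card - (upf b (v₁ * F)).card) :=
        sum_image_le_nat _ _ _
    _ < PhiR b f := Finset.sum_lt_sum (fun i _ => hpt i) ⟨v, hvmem, hstrict⟩

lemma mainR (hS : CondS b) {e : S} (he : IsIdempotentElem e) :
    ∀ n : ℕ, ∀ f : S, GoodR b e f → PhiR b f ≤ n →
      ∃ f', GoodR b e f' ∧ ∀ v ∈ ValsR b f', (∑ s ∈ upf b v, b s) = 0 := by
  intro n
  induction n with
  | zero =>
      intro f hG hP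
      by_cases h : ∀ v ∈ ValsR b f, (∑ s ∈ upf b v, b s) = 0
      · exact ⟨f, hG, h⟩
      · push_neg at h
        obtain ⟨v, hv, hsum⟩ := h
        obtain ⟨f', _, hlt⟩ := shrinkR b hS he hG hv hsum
        omega
  | succ n ih =>
      intro f hG hP
      by_cases h : ∀ v ∈ ValsR b f, (∑ s ∈ upf b v, b s) = 0
      · exact ⟨f, hG, h⟩
      · push_neg at h
        obtain ⟨v, hv, hsum⟩ := h
        obtain ⟨f', hG', hlt⟩ := shrinkR b hS he hG hv hsum
        exact ih f' hG' (by omega)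

lemma condS_to_R (hS : CondS b) {e : S} (he : IsIdempotentElem e) (he0 : e ≠ 0) :
    ∃ f : S, IsIdempotentElem f ∧ f ≠ 0 ∧ NatLe f e ∧
      ∀ t : S, t ≠ 0 → (∑ s ∈ b.support.filter (fun s => s * f = t), b s) = 0 := by
  obtain ⟨f₀, hG₀⟩ := exists_goodR b he he0
  obtain ⟨f, hG, hall⟩ := mainR b hS he (PhiR b f₀) f₀ hG₀ le_rfl
  obtain ⟨hf, hf0, hfe, hT⟩ := hG
  refine ⟨f, hf, hf0, hfe, ?_⟩
  intro t ht
  by_cases hex : ∃ s ∈ b.support, s * f = t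
  · obtain ⟨s, hsT, hst⟩ := hex
    have hsf : f * (star s * s) = f := by
      rcases hT s hsT with h | h
      · exfalso
        apply ht
        rw [← hst]
        calc s * f = (s * (star s * s)) * f := by
              conv_lhs => rw [show s = s * star s * s from (mss s).symm]
              simp only [mul_assoc]
          _ = s * ((star s * s) * f) := by simp only [mul_assoc]
          _ = s * 0 := by rw [h]
          _ = 0 := mulz s
      · exact h
    have htv : t ∈ ValsR b f := by
      rw [ValsR, Finset.mem_image]
      exact ⟨s, Finset.mem_filter.2 ⟨hsT, hsf⟩, hst⟩
    have htt : star t * t = f := by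
      rw [← hst]
      exact star_mul_self_of_under hf hsf
    have hfilter : b.support.filter (fun s' => s' * f = t) = upf b t := by
      apply Finset.filter_congr
      intro s' _
      constructor
      · intro h
        show NatLe t s'
        rw [natle_iff_right, htt, h]
      · intro h
        have := natle_iff_right.1 h
        rw [htt] at this
        exact this.symm
    rw [hfilter]
    exact hall t htv
  · push_neg at hex
    apply Finset.sum_eq_zero
    intro s hs
    rw [Finset.mem_filter] at hs
    exact absurd hs.2 (hex s hs.1)

lemma condR_to_S
    (hR : ∀ e : S, IsIdempotentElem e → e ≠ 0 → ∃ f : S, IsIdempotentElem f ∧ f ≠ 0 ∧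
      NatLe f e ∧ ∀ t : S, t ≠ 0 → (∑ s ∈ b.support.filter (fun s => s * f = t), b s) = 0) :
    CondS b := by
  intro t ht
  have he : IsIdempotentElem (star t * t) := idem_star_mul t
  have he0 : star t * t ≠ 0 := fun h => ht (eq_zero_of_star_mul_self h)
  obtain ⟨f, hf, hf0, hfe, hsum⟩ := hR _ he he0
  have hfe' : f * (star t * t) = f := by
    have h1 : f = (star t * t) * f := (natle_idem_iff he hf).1 hfe
    rw [idem_comm hf he]
    exact h1.symm
  set u := t * f with hu
  have huu : star u * u = f := star_mul_self_of_under hf hfe'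
  have hu0 : u ≠ 0 := mul_idem_ne_zero hf hf0 hfe'
  refine ⟨u, hu0, natle_mul_idem t hf, ?_⟩
  have hfilter : b.support.filter (fun s => s * f = u) = upf b u := by
    apply Finset.filter_congr
    intro s' _
    constructor
    · intro h
      show NatLe u s'
      rw [natle_iff_right, huu, h]
    · intro h
      have := natle_iff_right.1 h
      rw [huu] at this
      exact this.symm
  rw [← hfilter]
  exact hsum u hu0

/-- `f` is a "good" idempotent under `e` (left version). -/
def GoodL (e f : S) : Prop := IsIdempotentElem f ∧ f ≠ 0 ∧ NatLe f e ∧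
  ∀ s ∈ b.support, f * (s * star s) = 0 ∨ (s * star s) * f = f

noncomputable def ValsL (f : S) : Finset S :=
  (b.support.filter (fun s => (s * star s) * f = f)).image (fun s => f * s)

noncomputable def PhiL (f : S) : ℕ :=
  ∑ v ∈ ValsL b f, (b.support.card - (upf b v).card)

lemma exists_goodL {e : S} (he : IsIdempotentElem e) (he0 : e ≠ 0) :
    ∃ f, GoodL b e f := by
  suffices h : ∀ T : Finset S, ∃ f : S, IsIdempotentElem f ∧ f ≠ 0 ∧ NatLe f e ∧
      ∀ s ∈ T, f * (s * star s) = 0 ∨ (s * star s) * f = f by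
    obtain ⟨f, h1, h2, h3, h4⟩ := h b.support
    exact ⟨f, h1, h2, h3, h4⟩
  intro T
  induction T using Finset.induction_on with
  | empty => exact ⟨e, he, he0, natle_refl_idem he, by simp⟩
  | insert a T hx ih =>
      obtain ⟨f, hf, hf0, hfe, hT⟩ := ih
      by_cases h0 : f * (a * star a) = 0
      · refine ⟨f, hf, hf0, hfe, ?_⟩
        intro s hs
        rcases Finset.mem_insert.1 hs with rfl | hs
        · exact Or.inl h0
        · exact hT s hs
      · set g := a * star a with hg
        have hgI : IsIdempotentElem g := idem_mul_star a
        have h0' : g * f ≠ 0 := by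
          rw [idem_comm hgI hf]
          exact h0
        refine ⟨g * f, idem_mul hgI hf, h0', ?_, ?_⟩
        · rw [natle_idem_iff he (idem_mul hgI hf)]
          have hfe' : f = e * f := (natle_idem_iff he hf).1 hfe
          calc g * f = g * (e * f) := by rw [← hfe']
            _ = (g * e) * f := by simp only [mul_assoc]
            _ = (e * g) * f := by rw [idem_comm hgI he]
            _ = e * (g * f) := by simp only [mul_assoc]
        · intro s hs
          rcases Finset.mem_insert.1 hs with rfl | hs
          · right
            calc (s * star s) * (g * f) = g * (g * f) := rfl
              _ = (g * g) * f := by simp only [mul_assoc]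
              _ = g * f := by rw [hgI]
          · rcases hT s hs with h | h
            · left
              calc (g * f) * (s * star s) = g * (f * (s * star s)) := by simp only [mul_assoc]
                _ = g * 0 := by rw [h]
                _ = 0 := mulz g
            · right
              calc (s * star s) * (g * f) = ((s * star s) * g) * f := by simp only [mul_assoc]
                _ = (g * (s * star s)) * f := by rw [idem_comm (idem_mul_star s) hgI]
                _ = g * ((s * star s) * f) := by simp only [mul_assoc]
                _ = g * f := by rw [h]

lemma shrinkL (hS : CondS b) {e f : S} (he : IsIdempotentElem e) (hG : GoodL b e f)
    {v : S} (hv : v ∈ ValsL b f) (hsum : (∑ s ∈ upf b v, b s) ≠ 0) :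
    ∃ f', GoodL b e f' ∧ PhiL b f' < PhiL b f := by
  obtain ⟨hf, hf0, hfe, hT⟩ := hG
  rw [ValsL, Finset.mem_image] at hv
  obtain ⟨s₀, hs₀, hvdef⟩ := hv
  rw [Finset.mem_filter] at hs₀
  subst hvdef
  set v := f * s₀ with hvdef
  have hvv : v * star v = f := mul_star_self_of_under hf hs₀.2
  have hv0 : v ≠ 0 := idem_mul_ne_zero hf hf0 hs₀.2
  obtain ⟨u, hu0, huv, husum⟩ := hS v hv0
  set F := u * star u with hF
  have hFI : IsIdempotentElem F := idem_mul_star u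
  have hF0 : F ≠ 0 := fun h => hu0 (eq_zero_of_mul_star_self h)
  have hfF : f * F = F := by rw [hF, ← hvv]; exact ran_absorb huv
  have hFf : F * f = F := by rw [idem_comm hFI hf]; exact hfF
  have hfe' : f = e * f := (natle_idem_iff he hf).1 hfe
  have hFe : NatLe F e := by
    rw [natle_idem_iff he hFI]
    have : e * F = F :=
      calc e * F = e * (f * F) := by rw [hfF]
        _ = (e * f) * F := by simp only [mul_assoc]
        _ = f * F := by rw [← hfe']
        _ = F := hfF
    exact this.symm
  have hGF : GoodL b e F := by
    refine ⟨hFI, hF0, hFe, ?_⟩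
    intro s hs
    rcases hT s hs with h | h
    · left
      calc F * (s * star s) = (F * f) * (s * star s) := by rw [hFf]
        _ = F * (f * (s * star s)) := by simp only [mul_assoc]
        _ = F * 0 := by rw [h]
        _ = 0 := mulz F
    · right
      calc (s * star s) * F = (s * star s) * (f * F) := by rw [hfF]
        _ = ((s * star s) * f) * F := by simp only [mul_assoc]
        _ = f * F := by rw [h]
        _ = F := hfF
  have hu_eq : F * v = u := by rw [hF]; exact (natle_left_iff.1 huv).symm
  have hmap : ∀ w ∈ ValsL b F, ∃ v₁ ∈ ValsL b f, w = F * v₁ := by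
    intro w hw
    rw [ValsL, Finset.mem_image] at hw
    obtain ⟨s, hs, rfl⟩ := hw
    rw [Finset.mem_filter] at hs
    obtain ⟨hsT, hsF⟩ := hs
    have hsf : (s * star s) * f = f := by
      rcases hT s hsT with h | h
      · exfalso
        apply hF0
        have hz : (s * star s) * F = 0 :=
          calc (s * star s) * F = (s * star s) * (f * F) := by rw [hfF]
            _ = ((s * star s) * f) * F := by simp only [mul_assoc]
            _ = (f * (s * star s)) * F := by rw [idem_comm (idem_mul_star s) hf]
            _ = 0 * F := by rw [h]
            _ = 0 := zmul F
        rw [← hsF, hz]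
      · exact h
    refine ⟨f * s, ?_, ?_⟩
    · rw [ValsL, Finset.mem_image]
      exact ⟨s, Finset.mem_filter.2 ⟨hsT, hsf⟩, rfl⟩
    · calc F * s = (F * f) * s := by rw [hFf]
        _ = F * (f * s) := by simp only [mul_assoc]
  have hsub : ValsL b F ⊆ (ValsL b f).image (fun v₁ => F * v₁) := by
    intro w hw
    obtain ⟨v₁, hv₁, rfl⟩ := hmap w hw
    exact Finset.mem_image_of_mem _ hv₁
  have hpt : ∀ v₁ : S, b.support.card - (upf b (F * v₁)).card
      ≤ b.support.card - (upf b v₁).card := by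
    intro v₁
    have h1 : upf b v₁ ⊆ upf b (F * v₁) := upf_mono b (natle_idem_mul v₁ hFI)
    have := Finset.card_le_card h1
    omega
  have hvmem : v ∈ ValsL b f := by
    rw [ValsL, Finset.mem_image]
    exact ⟨s₀, Finset.mem_filter.2 hs₀, rfl⟩
  have hstrict : b.support.card - (upf b (F * v)).card
      < b.support.card - (upf b v).card := by
    rw [hu_eq]
    have h1 : upf b v ⊆ upf b u := upf_mono b huv
    have h2 : upf b v ≠ upf b u := by
      intro h
      rw [h] at hsum
      exact hsum husum
    have h3 := Finset.card_lt_card (h1.ssubset_of_ne h2)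
    have h4 : (upf b u).card ≤ b.support.card :=
      Finset.card_le_card (Finset.filter_subset _ _)
    omega
  refine ⟨F, hGF, ?_⟩
  calc PhiL b F
      ≤ ∑ w ∈ (ValsL b f).image (fun v₁ => F * v₁), (b.support.card - (upf b w).card) :=
        Finset.sum_le_sum_of_subset hsub
    _ ≤ ∑ v₁ ∈ ValsL b f, (b.support.card - (upf b (F * v₁)).card) :=
        sum_image_le_nat _ _ _
    _ < PhiL b f := Finset.sum_lt_sum (fun i _ => hpt i) ⟨v, hvmem, hstrict⟩

lemma mainL (hS : CondS b) {e : S} (he : IsIdempotentElem e) :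
    ∀ n : ℕ, ∀ f : S, GoodL b e f → PhiL b f ≤ n →
      ∃ f', GoodL b e f' ∧ ∀ v ∈ ValsL b f', (∑ s ∈ upf b v, b s) = 0 := by
  intro n
  induction n with
  | zero =>
      intro f hG hP
      by_cases h : ∀ v ∈ ValsL b f, (∑ s ∈ upf b v, b s) = 0
      · exact ⟨f, hG, h⟩
      · push_neg at h
        obtain ⟨v, hv, hsum⟩ := h
        obtain ⟨f', _, hlt⟩ := shrinkL b hS he hG hv hsum
        omega
  | succ n ih =>
      intro f hG hP
      by_cases h : ∀ v ∈ ValsL b f, (∑ s ∈ upf b v, b s) = 0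
      · exact ⟨f, hG, h⟩
      · push_neg at h
        obtain ⟨v, hv, hsum⟩ := h
        obtain ⟨f', hG', hlt⟩ := shrinkL b hS he hG hv hsum
        exact ih f' hG' (by omega)

lemma condS_to_L (hS : CondS b) {e : S} (he : IsIdempotentElem e) (he0 : e ≠ 0) :
    ∃ f : S, IsIdempotentElem f ∧ f ≠ 0 ∧ NatLe f e ∧
      ∀ t : S, t ≠ 0 → (∑ s ∈ b.support.filter (fun s => f * s = t), b s) = 0 := by
  obtain ⟨f₀, hG₀⟩ := exists_goodL b he he0
  obtain ⟨f, hG, hall⟩ := mainL b hS he (PhiL b f₀) f₀ hG₀ le_rfl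
  obtain ⟨hf, hf0, hfe, hT⟩ := hG
  refine ⟨f, hf, hf0, hfe, ?_⟩
  intro t ht
  by_cases hex : ∃ s ∈ b.support, f * s = t
  · obtain ⟨s, hsT, hst⟩ := hex
    have hsf : (s * star s) * f = f := by
      rcases hT s hsT with h | h
      · exfalso
        apply ht
        rw [← hst]
        calc f * s = f * ((s * star s) * s) := by
              conv_lhs => rw [show s = s * star s * s from (mss s).symm]
          _ = (f * (s * star s)) * s := by simp only [mul_assoc]
          _ = 0 * s := by rw [h]
          _ = 0 := zmul s
      · exact h
    have htv : t ∈ ValsL b f := by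
      rw [ValsL, Finset.mem_image]
      exact ⟨s, Finset.mem_filter.2 ⟨hsT, hsf⟩, hst⟩
    have htt : t * star t = f := by
      rw [← hst]
      exact mul_star_self_of_under hf hsf
    have hfilter : b.support.filter (fun s' => f * s' = t) = upf b t := by
      apply Finset.filter_congr
      intro s' _
      constructor
      · intro h
        show NatLe t s'
        rw [natle_left_iff, htt, h]
      · intro h
        have := natle_left_iff.1 h
        rw [htt] at this
        exact this.symm
    rw [hfilter]
    exact hall t htv
  · push_neg at hex
    apply Finset.sum_eq_zero
    intro s hs
    rw [Finset.mem_filter] at hs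
    exact absurd hs.2 (hex s hs.1)

lemma condL_to_S
    (hL : ∀ e : S, IsIdempotentElem e → e ≠ 0 → ∃ f : S, IsIdempotentElem f ∧ f ≠ 0 ∧
      NatLe f e ∧ ∀ t : S, t ≠ 0 → (∑ s ∈ b.support.filter (fun s => f * s = t), b s) = 0) :
    CondS b := by
  intro t ht
  have he : IsIdempotentElem (t * star t) := idem_mul_star t
  have he0 : t * star t ≠ 0 := fun h => ht (eq_zero_of_mul_star_self h)
  obtain ⟨f, hf, hf0, hfe, hsum⟩ := hL _ he he0
  have hfe' : (t * star t) * f = f := by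
    exact ((natle_idem_iff he hf).1 hfe).symm
  set u := f * t with hu
  have huu : u * star u = f := mul_star_self_of_under hf hfe'
  have hu0 : u ≠ 0 := idem_mul_ne_zero hf hf0 hfe'
  refine ⟨u, hu0, natle_idem_mul t hf, ?_⟩
  have hfilter : b.support.filter (fun s => f * s = u) = upf b u := by
    apply Finset.filter_congr
    intro s' _
    constructor
    · intro h
      show NatLe u s'
      rw [natle_left_iff, huu, h]
    · intro h
      have := natle_left_iff.1 h
      rw [huu] at this
      exact this.symm
  rw [← hfilter]
  exact hsum u hu0

end Core
end IS0


open Classical in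
/-- For an element `a = Σ a_s s` of `K₀S` the following are equivalent:
(S) for every `t ≠ 0` there is `0 ≠ u ≤ t` with `Σ_{s ≥ u} a_s = 0`;
(R) for every non-zero idempotent `e` there is a non-zero idempotent `f ≤ e` with `a f = 0`;
(L) for every non-zero idempotent `e` there is a non-zero idempotent `f ≤ e` with `f a = 0`. -/
theorem stmt7 {K S : Type*} [CommRing K] [InverseSemigroup0 S]
    (b : S →₀ K) (hb0 : b 0 = 0) :
    List.TFAE
      [∀ t : S, t ≠ 0 → ∃ u : S, u ≠ 0 ∧ NatLe u t ∧
          (∑ s ∈ b.support.filter fun s => NatLe u s, b s) = 0,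
       ∀ e : S, IsIdempotentElem e → e ≠ 0 → ∃ f : S, IsIdempotentElem f ∧ f ≠ 0 ∧
          NatLe f e ∧ mk0 K S (toMA K S b) * iota K S f = 0,
       ∀ e : S, IsIdempotentElem e → e ≠ 0 → ∃ f : S, IsIdempotentElem f ∧ f ≠ 0 ∧
          NatLe f e ∧ iota K S f * mk0 K S (toMA K S b) = 0] := by

  classical
  tfae_have 1 → 2
  · intro h e he he0
    obtain ⟨f, hf, hf0, hfe, hsum⟩ := IS0.condS_to_R b h he he0
    refine ⟨f, hf, hf0, hfe, ?_⟩
    rw [IS0.mk0_mul_iota_eq_zero_iff]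
    exact hsum
  tfae_have 2 → 1
  · intro h
    apply IS0.condR_to_S b
    intro e he he0
    obtain ⟨f, hf, hf0, hfe, hz⟩ := h e he he0
    refine ⟨f, hf, hf0, hfe, ?_⟩
    rw [← IS0.mk0_mul_iota_eq_zero_iff]
    exact hz
  tfae_have 1 → 3
  · intro h e he he0
    obtain ⟨f, hf, hf0, hfe, hsum⟩ := IS0.condS_to_L b h he he0
    refine ⟨f, hf, hf0, hfe, ?_⟩
    rw [IS0.iota_mul_mk0_eq_zero_iff]
    exact hsum
  tfae_have 3 → 1
  · intro h
    apply IS0.condL_to_S b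
    intro e he he0
    obtain ⟨f, hf, hf0, hfe, hz⟩ := h e he he0
    refine ⟨f, hf, hf0, hfe, ?_⟩
    rw [← IS0.iota_mul_mk0_eq_zero_iff]
    exact hz
  tfae_finish
end

section
/- Let S be an inverse semigroup with zero, K a commutative unital ring, and suppose e, f₁, …, fₙ are non-zero idempotents with f₁, …, fₙ a cover of e. Then the element e − ⋁ᵢ fᵢ of K₀S is singular. Consequently the singular ideal of K₀S contains the tight ideal (the ideal generated by all such elements e − ⋁ F for F a cover of e). -/
variable (K S : Type*) [CommRing K] [InverseSemigroup0 S]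

/-- Iterated join `a₁ ∨ ⋯ ∨ aₙ` of (commuting) idempotents in a ring,
where `a ∨ b = a + b - a * b`. -/
noncomputable def joinList : List (Kzero K S) → Kzero K S
  | [] => 0
  | a :: l => a + joinList l - a * joinList l

/-- `F` is a cover of the idempotent `e` by non-zero idempotents below `e`:
every non-zero idempotent below `e` meets some member of `F`. -/
def IsCover (e : S) (F : List S) : Prop :=
  (∀ f ∈ F, IsIdempotentElem f ∧ f ≠ 0 ∧ NatLe f e) ∧
    ∀ h : S, IsIdempotentElem h → h ≠ 0 → NatLe h e → ∃ f ∈ F, h * f ≠ 0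

/-- The generators `e - ⋁ F` (for `F` a cover of the non-zero idempotent `e`)
of the tight ideal of `K₀S`. -/
noncomputable def TightGen : Set (Kzero K S) :=
  {x | ∃ (e : S) (F : List S), IsIdempotentElem e ∧ e ≠ 0 ∧ IsCover S e F ∧
        x = iota K S e - joinList K S (F.map (iota K S))}

/-- The tight ideal of `K₀S`: the two-sided ideal generated by the elements
`e - ⋁ F` with `F` a cover of `e`. -/
noncomputable def TightIdealSet : Set (Kzero K S) :=
  ⋂₀ {J : Set (Kzero K S) | IsIdealSet K S J ∧ TightGen K S ⊆ J}

/-! ### Auxiliary lemmas on inverse semigroups with zero -/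

section SGp
open InverseSemigroup0
variable {T : Type*} [InverseSemigroup0 T]

theorem is0_star_star (s : T) : star (star s) = s :=
  (star_unique _ _ (star_mul_self_star s) (mul_star_mul_self s)).symm

theorem is0_star_idem {e : T} (he : e * e = e) : star e = e :=
  (star_unique e e (by rw [he, he]) (by rw [he, he])).symm

theorem is0_ss_idem (s : T) : (star s * s) * (star s * s) = star s * s := by
  rw [← mul_assoc, star_mul_self_star]

theorem is0_sS_idem (s : T) : (s * star s) * (s * star s) = s * star s := by
  rw [← mul_assoc, mul_star_mul_self]

theorem is0_mul_idem {e f : T} (he : e * e = e) (hf : f * f = f) :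
    (e * f) * (e * f) = e * f := by
  set x := star (e * f) with hxdef
  have hx1 := mul_star_mul_self (e * f)
  have hx2 := star_mul_self_star (e * f)
  rw [← hxdef] at hx1 hx2
  have he2 : ∀ z : T, e * (e * z) = e * z := fun z => by rw [← mul_assoc, he]
  have hf2 : ∀ z : T, f * (f * z) = f * z := fun z => by rw [← mul_assoc, hf]
  have hx2' : ∀ z : T, x * (e * (f * (x * z))) = x * z := fun z => by
    simpa only [mul_assoc] using congrArg (· * z) hx2
  have key : f * x * e = x := star_unique (e * f) (f * x * e)
    (by simp only [mul_assoc]; rw [hf2, he2]; simpa only [mul_assoc] using hx1)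
    (by simp only [mul_assoc]; rw [he2, hf2, hx2'])
  have hxx : x * x = x := by
    conv_lhs => rw [← key]
    simp only [mul_assoc]
    rw [hx2', ← mul_assoc, key]
  have hsx : star x = x := is0_star_idem hxx
  have hefx : e * f = x := by rw [← is0_star_star (e * f), ← hxdef]; exact hsx
  rw [hefx]; exact hxx

theorem is0_idem_comm {e f : T} (he : e * e = e) (hf : f * f = f) : e * f = f * e := by
  have h1 := is0_mul_idem he hf
  have h2 := is0_mul_idem hf he
  have he2 : ∀ z : T, e * (e * z) = e * z := fun z => by rw [← mul_assoc, he]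
  have hf2 : ∀ z : T, f * (f * z) = f * z := fun z => by rw [← mul_assoc, hf]
  have key : f * e = star (e * f) := star_unique (e * f) (f * e)
    (by simp only [mul_assoc]; rw [hf2, he2]; simpa only [mul_assoc] using h1)
    (by simp only [mul_assoc]; rw [he2, hf2]; simpa only [mul_assoc] using h2)
  rw [key, is0_star_idem h1]

theorem is0_star_mul (a b : T) : star (a * b) = star b * star a := by
  have comm : (b * star b) * (star a * a) = (star a * a) * (b * star b) :=
    is0_idem_comm (is0_sS_idem b) (is0_ss_idem a)
  refine (star_unique (a * b) (star b * star a) ?_ ?_).symm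
  · calc (a * b) * (star b * star a) * (a * b)
        = a * ((b * star b) * (star a * a)) * b := by simp only [mul_assoc]
      _ = a * ((star a * a) * (b * star b)) * b := by rw [comm]
      _ = (a * star a * a) * (b * star b * b) := by simp only [mul_assoc]
      _ = a * b := by rw [mul_star_mul_self, mul_star_mul_self]
  · calc (star b * star a) * (a * b) * (star b * star a)
        = star b * ((star a * a) * (b * star b)) * star a := by simp only [mul_assoc]
      _ = star b * ((b * star b) * (star a * a)) * star a := by rw [← comm]
      _ = (star b * b * star b) * (star a * a * star a) := by simp only [mul_assoc]
      _ = star b * star a := by rw [star_mul_self_star, star_mul_self_star]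

theorem is0_eq_zero_of_mul_star {t : T} (h : t * star t = 0) : t = 0 := by
  have h2 := mul_star_mul_self t
  rw [h, InverseSemigroup0.zero_mul] at h2
  exact h2.symm

theorem natle_idem_iff {f : T} (e : T) (hf : f * f = f) : NatLe f e ↔ f = e * f := by
  rw [NatLe, is0_star_idem hf, mul_assoc, hf]

theorem natle_refl_of_idem {e : T} (he : e * e = e) : NatLe e e :=
  (natle_idem_iff e he).mpr he.symm

theorem natle_trans_idem {g f e : T} (hg : g * g = g) (hf : f * f = f)
    (h1 : NatLe g f) (h2 : NatLe f e) : NatLe g e := by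
  rw [natle_idem_iff _ hg] at h1 ⊢
  rw [natle_idem_iff _ hf] at h2
  calc g = f * g := h1
    _ = (e * f) * g := by rw [← h2]
    _ = e * (f * g) := mul_assoc _ _ _
    _ = e * g := by rw [← h1]

end SGp

/-! ### Auxiliary lemmas on `K₀S` -/

theorem iota_mul (s t : S) : iota K S s * iota K S t = iota K S (s * t) := by
  have h : (MonoidAlgebra.single s (1 : K)) * MonoidAlgebra.single t (1 : K)
      = MonoidAlgebra.single (s * t) (1 : K) := by
    rw [MonoidAlgebra.single_mul_single, one_mul]
  calc iota K S s * iota K S t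
      = mk0 K S (MonoidAlgebra.single s 1 * MonoidAlgebra.single t 1) := rfl
    _ = iota K S (s * t) := by rw [h]; rfl

theorem iota_zero : iota K S (0 : S) = 0 := by
  have h : ((MonoidAlgebra.single (0 : S) (1 : K) : MonoidAlgebra K S) : Kzero K S)
      = ((0 : MonoidAlgebra K S) : Kzero K S) :=
    (RingCon.eq _).mpr (RingConGen.Rel.of _ _ ⟨rfl, rfl⟩)
  simpa [iota, mk0] using h

theorem mk0_zero : mk0 K S (0 : MonoidAlgebra K S) = 0 := rfl

theorem mk0_add (p q : MonoidAlgebra K S) : mk0 K S (p + q) = mk0 K S p + mk0 K S q := rfl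

theorem mk0_single_mul_iota (s : S) (c : K) (f : S) :
    mk0 K S (MonoidAlgebra.single s c) * iota K S f = mk0 K S (MonoidAlgebra.single (s * f) c) := by
  have h : MonoidAlgebra.single s c * MonoidAlgebra.single f (1 : K)
      = MonoidAlgebra.single (s * f) c := by
    rw [MonoidAlgebra.single_mul_single, mul_one]
  calc mk0 K S (MonoidAlgebra.single s c) * iota K S f
      = mk0 K S (MonoidAlgebra.single s c * MonoidAlgebra.single f 1) := rfl
    _ = mk0 K S (MonoidAlgebra.single (s * f) c) := by rw [h]

theorem mk0_single_factor (t f : S) (c : K) (h : t * f = t) :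
    mk0 K S (MonoidAlgebra.single t c) = iota K S t * mk0 K S (MonoidAlgebra.single f c) := by
  have h2 : MonoidAlgebra.single t (1 : K) * MonoidAlgebra.single f c
      = MonoidAlgebra.single t c := by
    rw [MonoidAlgebra.single_mul_single, one_mul, h]
  calc mk0 K S (MonoidAlgebra.single t c)
      = mk0 K S (MonoidAlgebra.single t 1 * MonoidAlgebra.single f c) := by rw [h2]
    _ = iota K S t * mk0 K S (MonoidAlgebra.single f c) := rfl

/-! ### `joinList` lemmas -/

theorem joinList_mul_zero (y : Kzero K S) :
    ∀ L : List (Kzero K S), (∀ a ∈ L, a * y = 0) → joinList K S L * y = 0 := by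
  intro L
  induction L with
  | nil => intro _; show (0 : Kzero K S) * y = 0; exact zero_mul y
  | cons a l ih =>
    intro h
    have ha := h a List.mem_cons_self
    have hl := ih fun b hb => h b (List.mem_cons_of_mem a hb)
    show (a + joinList K S l - a * joinList K S l) * y = 0
    rw [sub_mul, add_mul, ha, hl, mul_assoc, hl, mul_zero]
    simp

theorem joinList_comm (y : Kzero K S) :
    ∀ L : List (Kzero K S), (∀ a ∈ L, a * y = y * a) → joinList K S L * y = y * joinList K S L := by
  intro L
  induction L with
  | nil => intro _; show (0 : Kzero K S) * y = y * 0; rw [zero_mul, mul_zero]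
  | cons a l ih =>
    intro h
    have ha := h a List.mem_cons_self
    have hl := ih fun b hb => h b (List.mem_cons_of_mem a hb)
    show (a + joinList K S l - a * joinList K S l) * y
        = y * (a + joinList K S l - a * joinList K S l)
    rw [sub_mul, add_mul, mul_sub, mul_add, ha, hl]
    congr 1
    rw [mul_assoc, hl, ← mul_assoc, ha, mul_assoc]

theorem joinList_mul_mem (y : Kzero K S) :
    ∀ L : List (Kzero K S), (∀ a ∈ L, a * y = y * a) → (∃ b ∈ L, b * y = y) →
      joinList K S L * y = y := by
  intro L
  induction L with
  | nil => rintro _ ⟨b, hb, -⟩; exact absurd hb List.not_mem_nil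
  | cons a l ih =>
    rintro h ⟨b, hb, hby⟩
    have ha := h a List.mem_cons_self
    have hl := fun c hc => h c (List.mem_cons_of_mem a hc)
    show (a + joinList K S l - a * joinList K S l) * y = y
    rw [sub_mul, add_mul]
    rcases List.mem_cons.mp hb with rfl | hbl
    · have hcl := joinList_comm K S y l hl
      rw [hby, mul_assoc, hcl, ← mul_assoc, hby]
      exact add_sub_cancel_right y (y * joinList K S l)
    · have hjy := ih hl ⟨b, hbl, hby⟩
      rw [hjy, mul_assoc, hjy]
      abel

/-! ### The singular ideal -/

theorem singular_zero : Singular K S 0 := fun e he hene =>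
  ⟨e, he, hene, natle_refl_of_idem he.eq, by rw [zero_mul]⟩

theorem singular_add (a b : Kzero K S) (ha : Singular K S a) (hb : Singular K S b) :
    Singular K S (a + b) := by
  intro e he hene
  obtain ⟨f, hf, hfne, hfe, haf⟩ := ha e he hene
  obtain ⟨g, hg, hgne, hgf, hbg⟩ := hb f hf hfne
  have hgf' : g = f * g := (natle_idem_iff f hg.eq).mp hgf
  have hig : iota K S g = iota K S f * iota K S g := by rw [iota_mul, ← hgf']
  have hag : a * iota K S g = 0 := by rw [hig, ← mul_assoc, haf, zero_mul]
  exact ⟨g, hg, hgne, natle_trans_idem hg.eq hf.eq hgf hfe,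
    by rw [add_mul, hag, hbg, add_zero]⟩

theorem singular_neg (a : Kzero K S) (ha : Singular K S a) : Singular K S (-a) := by
  intro e he hene
  obtain ⟨f, hf, hfne, hfe, haf⟩ := ha e he hene
  exact ⟨f, hf, hfne, hfe, by rw [neg_mul a (iota K S f), haf, neg_zero]⟩

theorem singular_mul_left (a : Kzero K S) (ha : Singular K S a) (x : Kzero K S) :
    Singular K S (x * a) := by
  intro e he hene
  obtain ⟨f, hf, hfne, hfe, haf⟩ := ha e he hene
  exact ⟨f, hf, hfne, hfe, by rw [mul_assoc, haf, mul_zero]⟩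

/-- Key lemma: if `a` is singular and `s : S`, then for every non-zero idempotent `e` there
is a non-zero idempotent `f ≤ e` with `a * s * f = 0`. -/
theorem singular_iota (a : Kzero K S) (ha : Singular K S a) (s : S) (e : S)
    (he : IsIdempotentElem e) (hene : e ≠ 0) :
    ∃ f : S, IsIdempotentElem f ∧ f ≠ 0 ∧ NatLe f e ∧
      a * iota K S s * iota K S f = 0 := by
  by_cases hse : s * e * star s = 0
  · have hse0 : s * e = 0 := by
      apply is0_eq_zero_of_mul_star
      have hstar : star (s * e) = e * star s := by rw [is0_star_mul, is0_star_idem he.eq]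
      rw [hstar]
      calc (s * e) * (e * star s) = s * (e * e) * star s := by simp only [mul_assoc]
        _ = 0 := by rw [he.eq]; exact hse
    exact ⟨e, he, hene, natle_refl_of_idem he.eq,
      by rw [mul_assoc, iota_mul, hse0, iota_zero, mul_zero]⟩
  · set g := s * e * star s with hg
    have comm := is0_idem_comm he.eq (is0_ss_idem s)
    have hgg : g * g = g := by
      calc g * g = s * ((e * (star s * s)) * e) * star s := by simp only [hg, mul_assoc]
        _ = s * (((star s * s) * e) * e) * star s := by rw [comm]
        _ = (s * star s * s) * (e * e) * star s := by simp only [mul_assoc]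
        _ = g := by
            rw [InverseSemigroup0.mul_star_mul_self s, he.eq]
    obtain ⟨f, hf, hfne, hfg, hafz⟩ := ha g hgg hse
    have hfgf : f = g * f := (natle_idem_iff g hf.eq).mp hfg
    have hssf : (s * star s) * f = f := by
      conv_lhs => rw [hfgf]
      calc (s * star s) * (g * f) = (s * star s * s) * e * star s * f := by
            simp only [hg, mul_assoc]
        _ = g * f := by rw [InverseSemigroup0.mul_star_mul_self]
        _ = f := hfgf.symm
    have hfss : f * (s * star s) = f := by
      rw [is0_idem_comm hf.eq (is0_sS_idem s)]; exact hssf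
    set f' := star s * f * s with hf'
    have hf'f' : f' * f' = f' := by
      calc f' * f' = star s * (f * ((s * star s) * f)) * s := by simp only [hf', mul_assoc]
        _ = star s * (f * f) * s := by rw [hssf]
        _ = f' := by rw [hf.eq]
    have hsf's : s * f' * star s = f := by
      calc s * f' * star s = ((s * star s) * f) * (s * star s) := by simp only [hf', mul_assoc]
        _ = f := by rw [hssf, hfss]
    have hf'ne : f' ≠ 0 := by
      intro h0
      apply hfne
      rw [← hsf's, h0, InverseSemigroup0.mul_zero, InverseSemigroup0.zero_mul]
    have h1 : star s * f = (star s * s) * (e * (star s * f)) := by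
      conv_lhs => rw [hfgf]
      simp only [hg, mul_assoc]
    have h2 : e * (star s * f) = star s * f := by
      conv_lhs => rw [h1]
      calc e * ((star s * s) * (e * (star s * f)))
          = (e * (star s * s)) * (e * (star s * f)) := by rw [← mul_assoc]
        _ = ((star s * s) * e) * (e * (star s * f)) := by rw [comm]
        _ = (star s * s) * ((e * e) * (star s * f)) := by simp only [mul_assoc]
        _ = (star s * s) * (e * (star s * f)) := by rw [he.eq]
        _ = star s * f := h1.symm
    have hef' : e * f' = f' := by
      calc e * f' = (e * (star s * f)) * s := by simp only [hf', mul_assoc]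
        _ = (star s * f) * s := by rw [h2]
        _ = f' := by simp only [hf', mul_assoc]
    have hsf' : s * f' = f * s := by
      calc s * f' = ((s * star s) * f) * s := by simp only [hf', mul_assoc]
        _ = f * s := by rw [hssf]
    refine ⟨f', hf'f', hf'ne, (natle_idem_iff e hf'f').mpr hef'.symm, ?_⟩
    rw [mul_assoc, iota_mul, hsf', ← iota_mul, ← mul_assoc, hafz, zero_mul]

theorem singular_mul_right (a : Kzero K S) (ha : Singular K S a) (x : Kzero K S) :
    Singular K S (a * x) := by
  obtain ⟨p, rfl⟩ := Quotient.exists_rep x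
  show Singular K S (a * mk0 K S p)
  refine MonoidAlgebra.induction (motive := fun q : MonoidAlgebra K S => Singular K S (a * mk0 K S q))
    p ?_ ?_
  · intro e he hene
    exact ⟨e, he, hene, natle_refl_of_idem he.eq, by
      show a * (0 : Kzero K S) * iota K S e = 0
      rw [mul_zero, zero_mul]⟩
  · intro s c q _ _ IH
    intro e he hene
    obtain ⟨f₁, hf₁, hf₁ne, hf₁e, hA⟩ := singular_iota K S a ha s e he hene
    obtain ⟨f₂, hf₂, hf₂ne, hf₂f₁, hB⟩ := IH f₁ hf₁ hf₁ne
    have hf₂f₁' : f₂ = f₁ * f₂ := (natle_idem_iff f₁ hf₂.eq).mp hf₂f₁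
    have hf₂e : NatLe f₂ e := natle_trans_idem hf₂.eq hf₁.eq hf₂f₁ hf₁e
    refine ⟨f₂, hf₂, hf₂ne, hf₂e, ?_⟩
    have hif₂ : iota K S f₂ = iota K S f₁ * iota K S f₂ := by rw [iota_mul, ← hf₂f₁']
    have term1 : a * mk0 K S (MonoidAlgebra.single s c) * iota K S f₂ = 0 := by
      rw [hif₂, ← mul_assoc]
      have h0 : a * mk0 K S (MonoidAlgebra.single s c) * iota K S f₁ = 0 := by
        rw [mul_assoc, mk0_single_mul_iota,
          mk0_single_factor K S (s * f₁) f₁ c (by rw [mul_assoc, hf₁.eq]),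
          ← mul_assoc, ← iota_mul, ← mul_assoc, hA, zero_mul]
      rw [h0, zero_mul]
    show a * (mk0 K S (MonoidAlgebra.single s c) + mk0 K S q) * iota K S f₂ = 0
    rw [mul_add, add_mul, term1, hB, add_zero]

/-! ### Singularity of the tight generators -/

theorem tightGen_singular (e : S) (F : List S) (he : IsIdempotentElem e) (hene : e ≠ 0)
    (hc : IsCover S e F) :
    Singular K S (iota K S e - joinList K S (F.map (iota K S))) := by
  obtain ⟨hF, hcov⟩ := hc
  intro h hh hhne
  by_cases hhe : h * e = 0
  · refine ⟨h, hh, hhne, natle_refl_of_idem hh.eq, ?_⟩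
    have heh : e * h = 0 := by rw [is0_idem_comm he.eq hh.eq]; exact hhe
    have hjoin : joinList K S (F.map (iota K S)) * iota K S h = 0 := by
      apply joinList_mul_zero
      intro b hb
      obtain ⟨fi, hfiF, rfl⟩ := List.mem_map.mp hb
      obtain ⟨hfi, hfine, hfie⟩ := hF fi hfiF
      have h1 : fi = e * fi := (natle_idem_iff e hfi.eq).mp hfie
      have h1' : fi = fi * e := by
        conv_lhs => rw [h1]
        exact is0_idem_comm he.eq hfi.eq
      have h2 : fi * h = 0 := by
        calc fi * h = (fi * e) * h := by conv_lhs => rw [h1']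
          _ = fi * (e * h) := mul_assoc _ _ _
          _ = 0 := by rw [heh, InverseSemigroup0.mul_zero]
      rw [iota_mul, h2, iota_zero]
    rw [sub_mul, iota_mul, heh, iota_zero, hjoin, sub_zero]
  · have hhe_idem : (h * e) * (h * e) = h * e := is0_mul_idem hh.eq he.eq
    have hcomm : h * e = e * h := is0_idem_comm hh.eq he.eq
    have hheE : NatLe (h * e) e := by
      refine (natle_idem_iff e hhe_idem).mpr ?_
      calc h * e = h * (e * e) := by rw [he.eq]
        _ = (h * e) * e := (mul_assoc _ _ _).symm
        _ = (e * h) * e := by rw [← hcomm]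
        _ = e * (h * e) := mul_assoc _ _ _
    obtain ⟨fi, hfiF, hmeet⟩ := hcov (h * e) hhe_idem hhe hheE
    obtain ⟨hfi, hfine, hfie⟩ := hF fi hfiF
    have hff : ((h * e) * fi) * ((h * e) * fi) = (h * e) * fi := is0_mul_idem hhe_idem hfi.eq
    have hfh : NatLe (h * e * fi) h := by
      refine (natle_idem_iff h hff).mpr ?_
      calc h * e * fi = ((h * h) * e) * fi := by rw [hh.eq]
        _ = h * (h * e * fi) := by simp only [mul_assoc]
    have hfie' : e * fi = fi := ((natle_idem_iff e hfi.eq).mp hfie).symm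
    have hfeq : h * e * fi = fi * (h * e) := is0_idem_comm hhe_idem hfi.eq
    have hxfi : (iota K S e - joinList K S (F.map (iota K S))) * iota K S fi = 0 := by
      rw [sub_mul, iota_mul, hfie']
      have hjoin : joinList K S (F.map (iota K S)) * iota K S fi = iota K S fi := by
        apply joinList_mul_mem
        · intro b hb
          obtain ⟨fj, hfjF, rfl⟩ := List.mem_map.mp hb
          obtain ⟨hfj, -, -⟩ := hF fj hfjF
          rw [iota_mul, iota_mul, is0_idem_comm hfj.eq hfi.eq]
        · exact ⟨iota K S fi, List.mem_map_of_mem hfiF,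
            by rw [iota_mul, hfi.eq]⟩
      rw [hjoin, sub_self]
    refine ⟨h * e * fi, hff, hmeet, hfh, ?_⟩
    rw [hfeq, ← iota_mul, ← mul_assoc, hxfi, zero_mul]

theorem tightIdeal_sub_singular : TightIdealSet K S ⊆ {x : Kzero K S | Singular K S x} := by
  intro x hx
  exact hx {y | Singular K S y}
    ⟨⟨singular_zero K S,
      fun a ha b hb => singular_add K S a b ha hb,
      fun a ha => singular_neg K S a ha,
      fun a ha y => ⟨singular_mul_left K S a ha y, singular_mul_right K S a ha y⟩⟩,
      fun z hz => by
        obtain ⟨e, F, he, hene, hc, rfl⟩ := hz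
        exact tightGen_singular K S e F he hene hc⟩

/-- If `f₁, …, fₙ` are non-zero idempotents covering the non-zero idempotent `e`, then
`e - ⋁ᵢ fᵢ` is singular in `K₀S`; consequently the singular ideal contains the tight
ideal. -/
theorem stmt9 (K S : Type*) [CommRing K] [InverseSemigroup0 S] :
    (∀ (e : S) (F : List S), IsIdempotentElem e → e ≠ 0 → IsCover S e F →
        Singular K S (iota K S e - joinList K S (F.map (iota K S)))) ∧
    TightIdealSet K S ⊆ {x : Kzero K S | Singular K S x} := by
  exact ⟨fun e F he hene hc => tightGen_singular K S e F he hene hc,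
    tightIdeal_sub_singular K S⟩
end

section
/- Let S be a Hausdorff inverse semigroup with zero and K a commutative unital ring. Then the singular ideal of K₀S equals the tight ideal of K₀S. -/
namespace Aux

variable {S : Type*} [InverseSemigroup0 S]

lemma zmul (s : S) : 0 * s = 0 := InverseSemigroup0.zero_mul s
lemma mulz (s : S) : s * 0 = 0 := InverseSemigroup0.mul_zero s
lemma sss (s : S) : s * star s * s = s := InverseSemigroup0.mul_star_mul_self s
lemma s's' (s : S) : star s * s * star s = star s := InverseSemigroup0.star_mul_self_star s
lemma star_uniq (s t : S) (h1 : s * t * s = s) (h2 : t * s * t = t) : t = star s :=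
  InverseSemigroup0.star_unique s t h1 h2

lemma star_star (s : S) : star (star s) = s :=
  (star_uniq (star s) s (s's' s) (sss s)).symm

lemma star_of_idem {e : S} (he : e * e = e) : star e = e :=
  (star_uniq e e (by rw [he, he]) (by rw [he, he])).symm

lemma star_zero : star (0 : S) = 0 := star_of_idem (zmul 0)

theorem idem_mul_idem {e f : S} (he : e * e = e) (hf : f * f = f) :
    (e * f) * (e * f) = e * f := by
  set x := star (e * f) with hx
  have h1 : (e * f) * x * (e * f) = e * f := sss (e * f)
  have h2 : x * (e * f) * x = x := s's' (e * f)
  have hfxe : f * x * e = x := by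
    refine star_uniq (e * f) (f * x * e) ?_ ?_
    · calc (e * f) * (f * x * e) * (e * f)
          = e * ((f * f) * (x * ((e * e) * f))) := by simp only [mul_assoc]
        _ = e * (f * (x * (e * f))) := by rw [he, hf]
        _ = (e * f) * x * (e * f) := by simp only [mul_assoc]
        _ = e * f := h1
    · calc (f * x * e) * (e * f) * (f * x * e)
          = f * (x * ((e * e) * ((f * f) * (x * e)))) := by simp only [mul_assoc]
        _ = f * (x * (e * (f * (x * e)))) := by rw [he, hf]
        _ = f * ((x * (e * f) * x) * e) := by simp only [mul_assoc]
        _ = f * (x * e) := by rw [h2]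
        _ = f * x * e := by simp only [mul_assoc]
  have hxx : x * x = x := by
    conv_lhs => rw [← hfxe]
    calc (f * x * e) * (f * x * e)
        = f * (x * (e * f) * (x * e)) := by simp only [mul_assoc]
      _ = f * (x * (e * f) * x * e) := by simp only [mul_assoc]
      _ = f * (x * e) := by rw [h2]
      _ = x := by rw [← mul_assoc]; exact hfxe
  have h3 : e * f = x := by
    have h4 : star x = x := star_of_idem hxx
    rw [hx, star_star] at h4
    rw [hx]
    exact h4
  rw [h3]; exact hxx

theorem idem_comm {e f : S} (he : e * e = e) (hf : f * f = f) :
    f * e = e * f := by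
  have hef := idem_mul_idem he hf
  have hfe := idem_mul_idem hf he
  have h := star_uniq (e * f) (f * e) ?_ ?_
  · rw [h, star_of_idem hef]
  · calc (e * f) * (f * e) * (e * f)
        = e * ((f * f) * ((e * e) * f)) := by simp only [mul_assoc]
      _ = e * (f * (e * f)) := by rw [he, hf]
      _ = (e * f) * (e * f) := by simp only [mul_assoc]
      _ = e * f := hef
  · calc (f * e) * (e * f) * (f * e)
        = f * ((e * e) * ((f * f) * e)) := by simp only [mul_assoc]
      _ = f * (e * (f * e)) := by rw [he, hf]
      _ = (f * e) * (f * e) := by simp only [mul_assoc]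
      _ = f * e := hfe

lemma star_mul_self_idem (s : S) : (star s * s) * (star s * s) = star s * s := by
  calc (star s * s) * (star s * s) = star s * (s * star s * s) := by simp only [mul_assoc]
    _ = star s * s := by rw [sss]

lemma mul_star_self_idem (s : S) : (s * star s) * (s * star s) = s * star s := by
  calc (s * star s) * (s * star s) = (s * star s * s) * star s := by simp only [mul_assoc]
    _ = s * star s := by rw [sss]

theorem star_mul (s t : S) : star (s * t) = star t * star s := by
  have hc1 : (t * star t) * (star s * s) = (star s * s) * (t * star t) :=
    idem_comm (star_mul_self_idem s) (mul_star_self_idem t)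
  refine (star_uniq (s * t) (star t * star s) ?_ ?_).symm
  · calc (s * t) * (star t * star s) * (s * t)
        = s * ((t * star t) * (star s * s) * t) := by simp only [mul_assoc]
      _ = s * ((star s * s) * (t * star t) * t) := by rw [hc1]
      _ = (s * star s * s) * (t * star t * t) := by simp only [mul_assoc]
      _ = s * t := by rw [sss, sss]
  · calc (star t * star s) * (s * t) * (star t * star s)
        = star t * ((star s * s) * (t * star t)) * star s := by simp only [mul_assoc]
      _ = star t * ((t * star t) * (star s * s)) * star s := by rw [← hc1]
      _ = (star t * t * star t) * (star s * s * star s) := by simp only [mul_assoc]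
      _ = star t * star s := by rw [s's', s's']

end Aux

namespace Aux

variable {S : Type*} [InverseSemigroup0 S]

lemma natLe_refl (a : S) : NatLe a a := (sss a).symm

lemma natLe_rw {a b : S} (h : NatLe a b) : a = b * (star a * a) := by
  rw [← mul_assoc]; exact h

theorem natLe_iff {a b : S} : NatLe a b ↔ ∃ e, e * e = e ∧ a = b * e := by
  constructor
  · intro h
    exact ⟨star a * a, star_mul_self_idem a, natLe_rw h⟩
  · rintro ⟨e, he, rfl⟩
    have hstar : star (b * e) = e * star b := by rw [star_mul, star_of_idem he]
    show b * e = b * star (b * e) * (b * e)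
    rw [hstar]
    calc b * e = (b * star b * b) * (e * e) := by rw [sss, he]
      _ = b * ((star b * b) * e) * e := by simp only [mul_assoc]
      _ = b * (e * (star b * b)) * e := by
            rw [idem_comm (star_mul_self_idem b) he]
      _ = b * (e * star b) * (b * e) := by simp only [mul_assoc]

lemma natLe_trans {a b c : S} (h1 : NatLe a b) (h2 : NatLe b c) : NatLe a c := by
  obtain ⟨e, he, rfl⟩ := natLe_iff.1 h1
  obtain ⟨f, hf, rfl⟩ := natLe_iff.1 h2
  rw [mul_assoc]
  exact natLe_iff.2 ⟨f * e, idem_mul_idem hf he, rfl⟩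

lemma natLe_antisymm {a b : S} (h1 : NatLe a b) (h2 : NatLe b a) : a = b := by
  obtain ⟨e, he, h1⟩ := natLe_iff.1 h1
  obtain ⟨f, hf, h2⟩ := natLe_iff.1 h2
  have key : a = a * (f * e) := by
    rw [← mul_assoc, ← h2, ← h1]
  have haf : a * f = a := by
    calc a * f = a * (f * e) * f := by rw [← key]
      _ = a * (f * (e * f)) := by simp only [mul_assoc]
      _ = a * (f * (f * e)) := by rw [idem_comm hf he]
      _ = a * ((f * f) * e) := by simp only [mul_assoc]
      _ = a * (f * e) := by rw [hf]
      _ = a := by rw [← key]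
  rw [h2, haf]

lemma zero_natLe (s : S) : NatLe (0 : S) s := by
  show (0 : S) = s * star 0 * 0
  rw [mulz]

lemma natLe_zero {a : S} (h : NatLe a 0) : a = 0 := by
  obtain ⟨e, _, rfl⟩ := natLe_iff.1 h
  rw [zmul]

lemma natLe_mul_idem {e : S} (a : S) (he : e * e = e) : NatLe (a * e) a :=
  natLe_iff.2 ⟨e, he, rfl⟩

lemma natLe_mul_left {a b : S} (c : S) (h : NatLe a b) : NatLe (c * a) (c * b) := by
  obtain ⟨e, he, rfl⟩ := natLe_iff.1 h
  exact natLe_iff.2 ⟨e, he, by rw [mul_assoc]⟩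

lemma natLe_dd {a b : S} (h : NatLe a b) : NatLe (star a * a) (star b * b) := by
  obtain ⟨e, he, rfl⟩ := natLe_iff.1 h
  have hstar : star (b * e) = e * star b := by rw [star_mul, star_of_idem he]
  refine natLe_iff.2 ⟨e, he, ?_⟩
  rw [hstar]
  calc e * star b * (b * e) = e * ((star b * b) * e) := by simp only [mul_assoc]
    _ = e * (e * (star b * b)) := by rw [idem_comm (star_mul_self_idem b) he]
    _ = (e * e) * (star b * b) := by simp only [mul_assoc]
    _ = star b * b * e := by
          rw [he]; exact idem_comm (star_mul_self_idem b) he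

/-- For idempotents, `f ≤ e` gives `f = e * f`. -/
lemma idem_le_absorb {e f : S} (he : e * e = e) (h : NatLe f e) : e * f = f := by
  obtain ⟨g, hg, rfl⟩ := natLe_iff.1 h
  rw [← mul_assoc, he]

lemma idem_le_absorb' {e f : S} (he : e * e = e) (hf : f * f = f) (h : NatLe f e) :
    f * e = f := by
  rw [idem_comm he hf, idem_le_absorb he h]

lemma natLe_of_idem_absorb {e f : S} (hf : f * f = f) (h : e * f = f) : NatLe f e :=
  natLe_iff.2 ⟨f, hf, h.symm⟩

lemma natLe_ne_zero {a w : S} (ha : a ≠ 0) (h : NatLe a w) : w ≠ 0 := by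
  rintro rfl
  exact ha (natLe_zero h)

/-- If `u ≤ t` and `f ≤ t`, then `u * (f* f) ≤ f`. -/
lemma le_mul_dd_of_le {u f t : S} (hu : NatLe u t) (hf : NatLe f t) :
    NatLe (u * (star f * f)) f := by
  obtain ⟨e, he, rfl⟩ := natLe_iff.1 hu
  have hffi := star_mul_self_idem f
  have hrw : f = t * (star f * f) := natLe_rw hf
  have key : t * e * (star f * f) = f * e := by
    calc t * e * (star f * f) = t * (e * (star f * f)) := by simp only [mul_assoc]
      _ = t * ((star f * f) * e) := by rw [idem_comm he hffi]
      _ = (t * (star f * f)) * e := by simp only [mul_assoc]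
      _ = f * e := by rw [← hrw]
  rw [key]
  exact natLe_mul_idem f he

end Aux

namespace Aux

variable {S : Type*} [InverseSemigroup0 S]

/-- If `y ≤ u` and `y ≤ f` then `y ≤ u * (f* f)`. -/
lemma le_glue {y u f : S} (hyu : NatLe y u) (hyf : NatLe y f) :
    NatLe y (u * (star f * f)) := by
  obtain ⟨e₂, he₂, hdd⟩ := natLe_iff.1 (natLe_dd hyf)
  refine natLe_iff.2 ⟨e₂, he₂, ?_⟩
  calc y = u * (star y * y) := natLe_rw hyu
    _ = u * (star f * f * e₂) := by rw [← hdd]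
    _ = u * (star f * f) * e₂ := by simp only [mul_assoc]

lemma dd_of_le_dd {s g : S} (hgi : g * g = g) (hg : NatLe g (star s * s)) :
    star (s * g) * (s * g) = g := by
  have habs : (star s * s) * g = g := idem_le_absorb (star_mul_self_idem s) hg
  calc star (s * g) * (s * g) = (star g * star s) * (s * g) := by rw [star_mul]
    _ = star g * ((star s * s) * g) := by simp only [mul_assoc]
    _ = star g * g := by rw [habs]
    _ = g := by rw [star_of_idem hgi, hgi]

lemma smul_ne_zero {s g : S} (hgi : g * g = g) (hg : NatLe g (star s * s))
    (hgz : g ≠ 0) : s * g ≠ 0 := by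
  intro h
  apply hgz
  have h2 := dd_of_le_dd hgi hg
  rw [h] at h2
  rw [← h2, star_zero, zmul]

/-- every finite nonempty set has a `NatLe`-maximal element. -/
lemma exists_max (T : Finset S) (hne : T.Nonempty) :
    ∃ s₀ ∈ T, ∀ t ∈ T, NatLe s₀ t → t = s₀ := by
  classical
  induction T using Finset.induction with
  | empty => simp at hne
  | @insert a s ha ih =>
    by_cases hs : s.Nonempty
    · obtain ⟨m, hm, hmax⟩ := ih hs
      by_cases hma : NatLe m a
      · refine ⟨a, Finset.mem_insert_self a s, ?_⟩
        intro t ht hat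
        rcases Finset.mem_insert.1 ht with rfl | ht
        · rfl
        · have := hmax t ht (natLe_trans hma hat)
          subst this
          exact natLe_antisymm hma hat
      · refine ⟨m, Finset.mem_insert_of_mem hm, ?_⟩
        intro t ht hmt
        rcases Finset.mem_insert.1 ht with rfl | ht
        · exact absurd hmt hma
        · exact hmax t ht hmt
    · rw [Finset.not_nonempty_iff_eq_empty] at hs
      subst hs
      exact ⟨a, Finset.mem_insert_self a _, by
        intro t ht _
        simpa using ht⟩

end Aux

variable (K S : Type*) [CommRing K] [InverseSemigroup0 S]

/-- An inverse semigroup is Hausdorff if for all `s, t` the order ideal `s↓ ∩ t↓`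
is finitely generated. -/
def HausdorffIS (S : Type*) [InverseSemigroup0 S] : Prop :=
  ∀ s t : S, ∃ F : Finset S,
    {x : S | NatLe x s ∧ NatLe x t} = {x : S | ∃ f ∈ F, NatLe x f}

set_option linter.unusedSectionVars false

instance MonoidAlgebra.instCoeFunAux {K S : Type*} [CommRing K] :
    CoeFun (MonoidAlgebra K S) (fun _ => S → K) := ⟨fun u => u.coeff⟩

abbrev MonoidAlgebra.support {K S : Type*} [CommRing K] (a : MonoidAlgebra K S) : Finset S :=
  a.coeff.support

namespace Aux

variable {K S : Type*} [CommRing K] [InverseSemigroup0 S]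

open scoped Classical

/-- Erasing the coefficient of `0 : S`. -/
noncomputable def er0 (u : MonoidAlgebra K S) : MonoidAlgebra K S :=
  MonoidAlgebra.ofCoeff (Finsupp.erase 0 u.coeff)

lemma er0_add (u v : MonoidAlgebra K S) : er0 (u + v) = er0 u + er0 v :=
  congrArg MonoidAlgebra.ofCoeff (Finsupp.erase_add 0 u.coeff v.coeff)

lemma ma_add_apply (u v : MonoidAlgebra K S) (s : S) : (u + v) s = u s + v s :=
  Finsupp.add_apply u.coeff v.coeff s

lemma ma_neg_apply (u : MonoidAlgebra K S) (s : S) : (-u) s = -(u s) :=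
  Finsupp.neg_apply u.coeff s

lemma ma_sub_apply (u v : MonoidAlgebra K S) (s : S) : (u - v) s = u s - v s :=
  Finsupp.sub_apply u.coeff v.coeff s

lemma er0_apply_ne (u : MonoidAlgebra K S) {s : S} (hs : s ≠ 0) : er0 u s = u s :=
  Finsupp.erase_ne hs

lemma er0_apply_zero (u : MonoidAlgebra K S) : er0 u 0 = 0 := Finsupp.erase_same

lemma er0_zero : er0 (0 : MonoidAlgebra K S) = 0 :=
  congrArg MonoidAlgebra.ofCoeff (Finsupp.erase_zero (M := K) (0 : S))

lemma er0_single_zero (k : K) : er0 (MonoidAlgebra.single (0:S) k) = 0 := by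
  unfold er0
  ext s
  by_cases hs : s = (0:S)
  · subst hs; simp [Finsupp.erase_same, MonoidAlgebra.coeff_single]
  · simp [Finsupp.erase_ne hs, Finsupp.single_apply, MonoidAlgebra.coeff_single]

lemma er0_single_ne {s : S} (hs : s ≠ 0) (k : K) :
    er0 (MonoidAlgebra.single s k) = MonoidAlgebra.single s k := by
  ext u
  by_cases hu : u = (0:S)
  · subst hu
    rw [er0_apply_zero]
    rw [MonoidAlgebra.coeff_single, Finsupp.single_apply, if_neg]
    exact fun h => hs h
  · rw [er0_apply_ne _ hu]

lemma er0_add_single (u : MonoidAlgebra K S) :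
    er0 u + MonoidAlgebra.single (0:S) (u 0) = u :=
  MonoidAlgebra.coeff_injective (Finsupp.erase_add_single 0 u.coeff)

/-- coefficient formula for right multiplication by a single. -/
lemma mul_single_apply (a : MonoidAlgebra K S) (g : S) (k : K) (s : S) :
    (a * MonoidAlgebra.single g k) s
      = ∑ u ∈ a.support, (if u * g = s then a u * k else 0) := by
  rw [MonoidAlgebra.coeff_mul, MonoidAlgebra.coeff_single]
  rw [Finsupp.sum]
  refine Finset.sum_congr rfl ?_
  intro u _
  rw [Finsupp.sum_single_index (by simp)]

lemma single_mul_apply (a : MonoidAlgebra K S) (g : S) (k : K) (s : S) :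
    (MonoidAlgebra.single g k * a) s
      = ∑ u ∈ a.support, (if g * u = s then k * a u else 0) := by
  rw [MonoidAlgebra.coeff_mul, MonoidAlgebra.coeff_single]
  rw [Finsupp.sum_single_index (by simp [Finsupp.sum]), Finsupp.sum]

lemma mul_single_zero_apply (a : MonoidAlgebra K S) (k : K) {s : S} (hs : s ≠ 0) :
    (a * MonoidAlgebra.single (0 : S) k) s = 0 := by
  rw [mul_single_apply]
  refine Finset.sum_eq_zero ?_
  intro u _
  rw [if_neg]
  rw [mulz]
  exact fun h => hs h.symm

lemma single_zero_mul_apply (a : MonoidAlgebra K S) (k : K) {s : S} (hs : s ≠ 0) :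
    (MonoidAlgebra.single (0 : S) k * a) s = 0 := by
  rw [single_mul_apply]
  refine Finset.sum_eq_zero ?_
  intro u _
  rw [if_neg]
  rw [zmul]
  exact fun h => hs h.symm

lemma er0_mul_er0 (u v : MonoidAlgebra K S) :
    er0 (u * v) = er0 (er0 u * er0 v) := by
  have hu : u = er0 u + MonoidAlgebra.single (0 : S) (u 0) := (er0_add_single u).symm
  have hv : v = er0 v + MonoidAlgebra.single (0 : S) (v 0) := (er0_add_single v).symm
  conv_lhs => rw [hu, hv]
  rw [add_mul, mul_add, mul_add]
  ext s
  by_cases hs : s = (0 : S)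
  · subst hs
    rw [er0_apply_zero, er0_apply_zero]
  · rw [er0_apply_ne _ hs, er0_apply_ne _ hs]
    rw [ma_add_apply, ma_add_apply, ma_add_apply]
    rw [mul_single_zero_apply _ _ hs, single_zero_mul_apply _ _ hs,
      single_zero_mul_apply _ _ hs]
    ring

/-- the congruence given by equality away from `0`. -/
noncomputable def eraseCon : RingCon (MonoidAlgebra K S) where
  r a b := er0 a = er0 b
  iseqv := ⟨fun _ => rfl, Eq.symm, Eq.trans⟩
  add' := by
    intro w x y z h1 h2
    replace h1 : er0 w = er0 x := h1
    replace h2 : er0 y = er0 z := h2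
    show er0 (w + y) = er0 (x + z)
    rw [er0_add, er0_add, h1, h2]
  mul' := by
    intro w x y z h1 h2
    replace h1 : er0 w = er0 x := h1
    replace h2 : er0 y = er0 z := h2
    show er0 (w * y) = er0 (x * z)
    rw [er0_mul_er0, h1, h2, ← er0_mul_er0]

lemma contractedCon_iff (a b : MonoidAlgebra K S) :
    contractedCon K S a b ↔ er0 a = er0 b := by
  constructor
  · intro h
    have hle : contractedCon K S ≤ eraseCon := by
      apply RingCon.ringConGen_le.2
      rintro x y ⟨rfl, rfl⟩
      show er0 (MonoidAlgebra.single (0:S) (1:K)) = er0 (0 : MonoidAlgebra K S)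
      rw [er0_single_zero, er0_zero]
    exact RingCon.le_def.mp hle h
  · intro h
    have hz : ∀ k : K, contractedCon K S (MonoidAlgebra.single (0 : S) k) 0 := by
      intro k
      have h1 : contractedCon K S (MonoidAlgebra.single (0 : S) (1 : K)) 0 :=
        RingConGen.Rel.of _ _ ⟨rfl, rfl⟩
      have h2 := (contractedCon K S).mul
        ((contractedCon K S).refl (MonoidAlgebra.single (0 : S) k)) h1
      rw [MonoidAlgebra.single_mul_single, mulz, mul_one, mul_zero] at h2
      exact h2
    have key : ∀ u : MonoidAlgebra K S,
        contractedCon K S u (er0 u) := by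
      intro u
      have h3 := (contractedCon K S).add
        ((contractedCon K S).refl (er0 u)) (hz (u 0))
      rw [add_zero, er0_add_single] at h3
      exact h3
    refine (contractedCon K S).trans (key a) ?_
    rw [h]
    exact (contractedCon K S).symm (key b)

end Aux

namespace Aux

variable {K S : Type*} [CommRing K] [InverseSemigroup0 S]

lemma mk0_add (a b : MonoidAlgebra K S) :
    mk0 K S (a + b) = mk0 K S a + mk0 K S b := RingCon.coe_add _ a b

lemma mk0_mul (a b : MonoidAlgebra K S) :
    mk0 K S (a * b) = mk0 K S a * mk0 K S b := RingCon.coe_mul _ a b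

lemma mk0_zero : mk0 K S 0 = 0 := RingCon.coe_zero _

lemma mk0_neg (a : MonoidAlgebra K S) : mk0 K S (-a) = -mk0 K S a :=
  RingCon.coe_neg _ a

lemma mk0_sub (a b : MonoidAlgebra K S) :
    mk0 K S (a - b) = mk0 K S a - mk0 K S b := RingCon.coe_sub _ a b

lemma mk0_eq_iff (a b : MonoidAlgebra K S) :
    mk0 K S a = mk0 K S b ↔ er0 a = er0 b :=
  (RingCon.eq _).trans (contractedCon_iff a b)

lemma er0_er0 (a : MonoidAlgebra K S) : er0 (er0 a) = er0 a := by
  ext s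
  by_cases hs : s = (0 : S)
  · subst hs; rw [er0_apply_zero, er0_apply_zero]
  · rw [er0_apply_ne _ hs]

lemma mk0_er0 (a : MonoidAlgebra K S) : mk0 K S (er0 a) = mk0 K S a :=
  (mk0_eq_iff _ _).2 (er0_er0 a)

lemma mk0_eq_zero_iff (a : MonoidAlgebra K S) : mk0 K S a = 0 ↔ er0 a = 0 := by
  rw [← mk0_zero, mk0_eq_iff, er0_zero]

/-- canonical representative of an element of `K₀S`. -/
noncomputable def Phi (x : Kzero K S) : MonoidAlgebra K S :=
  Quotient.liftOn' x er0 (fun a b h => (contractedCon_iff a b).1 h)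

lemma Phi_mk0 (a : MonoidAlgebra K S) : Phi (mk0 K S a) = er0 a := rfl

lemma mk0_Phi (x : Kzero K S) : mk0 K S (Phi x) = x := by
  induction x using Quotient.inductionOn' with
  | h a => exact mk0_er0 a

lemma Phi_add (x y : Kzero K S) : Phi (x + y) = Phi x + Phi y := by
  induction x using Quotient.inductionOn' with
  | h a =>
  induction y using Quotient.inductionOn' with
  | h b =>
  show Phi (mk0 K S a + mk0 K S b) = Phi (mk0 K S a) + Phi (mk0 K S b)
  rw [← mk0_add, Phi_mk0, Phi_mk0, Phi_mk0, er0_add]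

lemma Phi_zero : Phi (0 : Kzero K S) = 0 := by
  rw [← mk0_zero, Phi_mk0, er0_zero]

lemma er0_neg (a : MonoidAlgebra K S) : er0 (-a) = -er0 a := by
  ext s
  by_cases hs : s = (0 : S)
  · subst hs; rw [er0_apply_zero, ma_neg_apply, er0_apply_zero, neg_zero]
  · rw [er0_apply_ne _ hs, ma_neg_apply, ma_neg_apply, er0_apply_ne _ hs]

lemma Phi_neg (x : Kzero K S) : Phi (-x) = -Phi x := by
  induction x using Quotient.inductionOn' with
  | h a =>
  show Phi (-mk0 K S a) = -Phi (mk0 K S a)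
  rw [← mk0_neg, Phi_mk0, Phi_mk0, er0_neg]

lemma Phi_sub (x y : Kzero K S) : Phi (x - y) = Phi x - Phi y := by
  rw [sub_eq_add_neg, Phi_add, Phi_neg, sub_eq_add_neg]

lemma Phi_apply_zero (x : Kzero K S) : Phi x 0 = 0 := by
  induction x using Quotient.inductionOn' with
  | h a => exact er0_apply_zero a

lemma Phi_eq_zero_iff (x : Kzero K S) : Phi x = 0 ↔ x = 0 := by
  constructor
  · intro h
    rw [← mk0_Phi x, h, mk0_zero]
  · rintro rfl
    exact Phi_zero

lemma mk0_single_zero (c : K) : mk0 K S (MonoidAlgebra.single (0:S) c) = 0 := by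
  rw [mk0_eq_zero_iff]
  exact er0_single_zero c

lemma iota_zero : iota K S (0 : S) = 0 := mk0_single_zero 1

lemma iota_mul (u v : S) : iota K S u * iota K S v = iota K S (u * v) := by
  unfold iota
  rw [← mk0_mul, MonoidAlgebra.single_mul_single, one_mul]

lemma mk0_single_mul_iota (u : S) (c : K) (v : S) :
    mk0 K S (MonoidAlgebra.single u c) * iota K S v
      = mk0 K S (MonoidAlgebra.single (u * v) c) := by
  unfold iota
  rw [← mk0_mul, MonoidAlgebra.single_mul_single, mul_one]

lemma iota_comm_idem {e f : S} (he : e * e = e) (hf : f * f = f) :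
    iota K S e * iota K S f = iota K S f * iota K S e := by
  rw [iota_mul, iota_mul, idem_comm he hf]

end Aux

namespace Aux

variable {K S : Type*} [CommRing K] [InverseSemigroup0 S]

lemma mul_dd (u : S) : u * (star u * u) = u := by
  rw [← mul_assoc]; exact sss u

/-- joinList kills common right annihilators. -/
lemma joinList_mul_zero (L : List (Kzero K S)) (y : Kzero K S)
    (h : ∀ a ∈ L, a * y = 0) : joinList K S L * y = 0 := by
  induction L with
  | nil => show (0 : Kzero K S) * y = 0; rw [zero_mul]
  | cons a l ih =>
    show (a + joinList K S l - a * joinList K S l) * y = 0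
    rw [sub_mul, add_mul, mul_assoc,
      ih (fun b hb => h b (List.mem_cons_of_mem a hb)),
      h a (List.mem_cons_self), mul_zero, zero_add, sub_zero]

lemma mul_joinList_comm (a : Kzero K S) (L : List (Kzero K S))
    (h : ∀ b ∈ L, a * b = b * a) : a * joinList K S L = joinList K S L * a := by
  induction L with
  | nil => show a * 0 = 0 * a; rw [mul_zero, zero_mul]
  | cons b l ih =>
    have hb := h b (List.mem_cons_self)
    have hl := ih (fun c hc => h c (List.mem_cons_of_mem b hc))
    show a * (b + joinList K S l - b * joinList K S l)
      = (b + joinList K S l - b * joinList K S l) * a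
    rw [mul_sub, sub_mul, mul_add, add_mul, hb, hl]
    rw [← mul_assoc a b (joinList K S l), hb, mul_assoc b a _, hl, ← mul_assoc]

/-- joinList absorbs: if some member of `L` fixes `y`, so does the join. -/
lemma joinList_mul_absorb (L : List (Kzero K S)) (y : Kzero K S)
    (hcomm : ∀ a ∈ L, ∀ b ∈ L, a * b = b * a)
    (h : ∃ u ∈ L, u * y = y) : joinList K S L * y = y := by
  induction L with
  | nil => obtain ⟨u, hu, _⟩ := h; simp at hu
  | cons a l ih =>
    show (a + joinList K S l - a * joinList K S l) * y = y
    rw [sub_mul, add_mul, mul_assoc]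
    obtain ⟨u, hu, huy⟩ := h
    rcases List.mem_cons.1 hu with rfl | hu'
    · -- u = a
      have hcl : u * joinList K S l = joinList K S l * u :=
        mul_joinList_comm u l (fun b hb =>
          hcomm u (List.mem_cons_self) b (List.mem_cons_of_mem u hb))
      have : u * (joinList K S l * y) = joinList K S l * y := by
        rw [← mul_assoc, hcl, mul_assoc, huy]
      rw [this, huy, add_sub_cancel_right]
    · have hl : joinList K S l * y = y :=
        ih (fun b hb c hc =>
          hcomm b (List.mem_cons_of_mem a hb) c (List.mem_cons_of_mem a hc))
          ⟨u, hu', huy⟩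
      rw [hl, add_sub_cancel_left]

/-- the shrinking lemma: a singular element can be annihilated below any
idempotent simultaneously against finitely many translates. -/
lemma shrink {a : Kzero K S} (ha : Singular K S a) (L : List S) :
    ∀ e : S, IsIdempotentElem e → e ≠ 0 →
      ∃ f : S, IsIdempotentElem f ∧ f ≠ 0 ∧ NatLe f e ∧
        ∀ t ∈ L, a * iota K S (t * f) = 0 := by
  induction L with
  | nil => intro e he hez; exact ⟨e, he, hez, natLe_refl e, by simp⟩
  | cons t L' ih =>
    intro e he hez
    obtain ⟨f', hf'i, hf'z, hf'le, hf'ann⟩ := ih e he hez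
    have hcomm1 : (star t * t) * f' = f' * (star t * t) :=
      idem_comm hf'i (star_mul_self_idem t)
    have htfg : t * f' = (t * f' * star t) * t := by
      calc t * f' = t * (f' * (star t * t)) := by
            rw [← hcomm1, ← mul_assoc, ← mul_assoc, sss]
        _ = (t * f' * star t) * t := by simp only [mul_assoc]
    by_cases hg0 : t * f' * star t = 0
    · refine ⟨f', hf'i, hf'z, hf'le, ?_⟩
      have htf : t * f' = 0 := by rw [htfg, hg0, zmul]
      intro t'' ht''
      rcases List.mem_cons.1 ht'' with h | ht'
      · rw [h, htf, iota_zero, mul_zero]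
      · exact hf'ann t'' ht'
    · -- singular at g := t * f' * star t
      set g := t * f' * star t with hgdef
      have hgi : g * g = g := by
        calc g * g = t * (f' * ((star t * t) * f')) * star t := by
              simp only [hgdef, mul_assoc]
          _ = t * (f' * (f' * (star t * t))) * star t := by rw [hcomm1]
          _ = t * ((f' * f') * (star t * t)) * star t := by simp only [mul_assoc]
          _ = t * (f' * (star t * t)) * star t := by rw [hf'i]
          _ = (t * f' * star t) * (t * star t) := by simp only [mul_assoc]
          _ = t * f' * (star t * t * star t) := by simp only [mul_assoc]
          _ = g := by rw [s's', hgdef]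
      obtain ⟨f'', hf''i, hf''z, hf''le, hf''ann⟩ := ha g hgi hg0
      have hgabs : g * (t * star t) = g := by
        calc g * (t * star t)
            = t * f' * (star t * t * star t) := by simp only [hgdef, mul_assoc]
          _ = g := by rw [s's', hgdef]
      have hf''g : f'' * g = f'' := idem_le_absorb' hgi hf''i hf''le
      have habs : f'' * (t * star t) = f'' := by
        rw [← hf''g, mul_assoc, hgabs]
      set f := star t * f'' * t with hfdef
      have hfi : f * f = f := by
        calc f * f = star t * ((f'' * (t * star t)) * f'') * t := by
              simp only [hfdef, mul_assoc]
          _ = star t * (f'' * f'') * t := by rw [habs]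
          _ = f := by rw [hf''i]
      have htft : t * f * star t = f'' := by
        calc t * f * star t = (t * star t) * f'' * (t * star t) := by
              simp only [hfdef, mul_assoc]
          _ = f'' * (t * star t) * (t * star t) := by
                rw [idem_comm hf''i (mul_star_self_idem t)]
          _ = f'' := by rw [mul_assoc, mul_star_self_idem, habs]
      have hfz : f ≠ 0 := by
        intro h0
        apply hf''z
        rw [← htft, h0, mulz, zmul]
      have hff' : f * f' = f := by
        calc f * f' = star t * (f'' * (t * f')) := by simp only [hfdef, mul_assoc]
          _ = star t * (f'' * (g * t)) := by rw [htfg]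
          _ = star t * ((f'' * g) * t) := by simp only [mul_assoc]
          _ = f := by rw [hf''g, hfdef, mul_assoc]
      have hlef' : NatLe f f' := natLe_of_idem_absorb hfi (by
        rw [idem_comm hfi hf'i] at *
        exact hff')
      have htf_eq : t * f = f'' * t := by
        calc t * f = (t * star t) * f'' * t := by simp only [hfdef, mul_assoc]
          _ = f'' * (t * star t) * t := by
                rw [idem_comm hf''i (mul_star_self_idem t)]
          _ = f'' * (t * star t * t) := by simp only [mul_assoc]
          _ = f'' * t := by rw [sss]
      have hf''tf : f'' * (t * f) = t * f := by
        rw [htf_eq, ← mul_assoc, hf''i]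
      refine ⟨f, hfi, hfz, natLe_trans hlef' hf'le, ?_⟩
      intro t'' ht''
      rcases List.mem_cons.1 ht'' with h | ht'
      · rw [h]
        have : iota K S (t * f) = iota K S f'' * iota K S (t * f) := by
          rw [iota_mul, hf''tf]
        rw [this, ← mul_assoc, hf''ann, zero_mul]
      · have : t'' * f = (t'' * f') * f := by
          rw [mul_assoc, idem_le_absorb hf'i hlef']
        rw [this, ← iota_mul, ← mul_assoc, hf'ann t'' ht', zero_mul]

end Aux

namespace Aux

variable {K S : Type*} [CommRing K] [InverseSemigroup0 S]

lemma mk0_sum {γ : Type*} (T : Finset γ) (f : γ → MonoidAlgebra K S) :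
    mk0 K S (∑ t ∈ T, f t) = ∑ t ∈ T, mk0 K S (f t) := by
  classical
  induction T using Finset.induction with
  | empty => simp [mk0_zero]
  | insert _ _ hnew ih =>
    rw [Finset.sum_insert hnew, Finset.sum_insert hnew, mk0_add, ih]

lemma mul_mk0_single {a : Kzero K S} (u : S) (c : K)
    (h : a * iota K S u = 0) : a * mk0 K S (MonoidAlgebra.single u c) = 0 := by
  have key : MonoidAlgebra.single u c
      = MonoidAlgebra.single u (1:K) * MonoidAlgebra.single (star u * u) c := by
    rw [MonoidAlgebra.single_mul_single, mul_dd, one_mul]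
  rw [key, mk0_mul, ← mul_assoc]
  show a * iota K S u * mk0 K S (MonoidAlgebra.single (star u * u) c) = 0
  rw [h, zero_mul]

lemma mul_annih (a : Kzero K S) (r : MonoidAlgebra K S) (f : S)
    (h : ∀ t ∈ r.support, a * iota K S (t * f) = 0) :
    a * (mk0 K S r * iota K S f) = 0 := by
  classical
  have hr : r = ∑ t ∈ r.support, MonoidAlgebra.single t (r t) :=
    (MonoidAlgebra.sum_coeff_single r).symm
  rw [show iota K S f = mk0 K S (MonoidAlgebra.single f (1:K)) from rfl, ← mk0_mul]
  conv_lhs => rw [hr]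
  rw [Finset.sum_mul, mk0_sum, Finset.mul_sum]
  refine Finset.sum_eq_zero ?_
  intro t ht
  rw [MonoidAlgebra.single_mul_single, mul_one]
  exact mul_mk0_single _ _ (by rw [← iota_mul]; rw [← mul_assoc]
                               exact (by rw [mul_assoc, iota_mul]; exact h t ht))

lemma singular_zero : Singular K S 0 := by
  intro e he hez
  exact ⟨e, he, hez, natLe_refl e, by rw [zero_mul]⟩

lemma singular_add {x y : Kzero K S} (hx : Singular K S x) (hy : Singular K S y) :
    Singular K S (x + y) := by
  intro e he hez
  obtain ⟨f1, hf1i, hf1z, hf1le, hf1⟩ := hx e he hez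
  obtain ⟨f2, hf2i, hf2z, hf2le, hf2⟩ := hy f1 hf1i hf1z
  refine ⟨f2, hf2i, hf2z, natLe_trans hf2le hf1le, ?_⟩
  have : iota K S f2 = iota K S f1 * iota K S f2 := by
    rw [iota_mul, idem_le_absorb hf1i hf2le]
  rw [add_mul, hf2, this, ← mul_assoc, hf1, zero_mul, add_zero]

lemma singular_neg {x : Kzero K S} (hx : Singular K S x) : Singular K S (-x) := by
  intro e he hez
  obtain ⟨f, hfi, hfz, hfle, hf⟩ := hx e he hez
  refine ⟨f, hfi, hfz, hfle, ?_⟩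
  rw [neg_mul x (iota K S f), hf, neg_zero]

lemma singular_mul_left (x : Kzero K S) {a : Kzero K S} (ha : Singular K S a) :
    Singular K S (x * a) := by
  intro e he hez
  obtain ⟨f, hfi, hfz, hfle, hf⟩ := ha e he hez
  exact ⟨f, hfi, hfz, hfle, by rw [mul_assoc, hf, mul_zero]⟩

lemma singular_mul_right {a : Kzero K S} (ha : Singular K S a) (x : Kzero K S) :
    Singular K S (a * x) := by
  intro e he hez
  obtain ⟨f, hfi, hfz, hfle, hf⟩ := shrink ha (Phi x).support.toList e he hez
  refine ⟨f, hfi, hfz, hfle, ?_⟩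
  rw [mul_assoc]
  have := mul_annih a (Phi x) f (fun t ht => hf t (Finset.mem_toList.2 ht))
  rwa [mk0_Phi] at this

lemma singularSet_ideal : IsIdealSet K S {x | Singular K S x} := by
  refine ⟨singular_zero, ?_, ?_, ?_⟩
  · intro a ha b hb; exact singular_add ha hb
  · intro a ha; exact singular_neg ha
  · intro a ha x; exact ⟨singular_mul_left x ha, singular_mul_right ha x⟩

lemma tightGen_subset_singular : TightGen K S ⊆ {x | Singular K S x} := by
  rintro x ⟨e, F, hei, hez, ⟨hmem, hcover⟩, rfl⟩
  intro h hhi hhz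
  -- two cases, according to whether e * h = 0
  have hehi : (e * h) * (e * h) = e * h := idem_mul_idem hei hhi
  by_cases heh : e * h = 0
  · refine ⟨h, hhi, hhz, natLe_refl h, ?_⟩
    rw [sub_mul]
    have h1 : iota K S e * iota K S h = 0 := by
      rw [iota_mul, heh, iota_zero]
    have h2 : joinList K S (F.map (iota K S)) * iota K S h = 0 := by
      apply joinList_mul_zero
      intro b hb
      obtain ⟨f0, hf0, rfl⟩ := List.mem_map.1 hb
      obtain ⟨hf0i, hf0z, hf0le⟩ := hmem f0 hf0
      rw [iota_mul]
      have : f0 * h = 0 := by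
        rw [← idem_le_absorb' hei hf0i hf0le, mul_assoc, heh, mulz]
      rw [this, iota_zero]
    rw [h1, h2, sub_zero]
  · -- e*h ≠ 0, use the cover at e*h
    have hehle : NatLe (e * h) e :=
      natLe_of_idem_absorb hehi (by rw [← mul_assoc, hei])
    obtain ⟨f0, hf0F, hf0ne⟩ := hcover (e * h) hehi heh hehle
    obtain ⟨hf0i, hf0z, hf0le⟩ := hmem f0 hf0F
    have hhf0 : e * h * f0 = h * f0 := by
      rw [← idem_comm hei hhi, mul_assoc, idem_le_absorb hei hf0le]
    refine ⟨h * f0, idem_mul_idem hhi hf0i, ?_, natLe_mul_idem h hf0i, ?_⟩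
    · rw [← hhf0]
      exact hf0ne
    · rw [sub_mul]
      have h1 : iota K S e * iota K S (h * f0) = iota K S (h * f0) := by
        rw [iota_mul, ← mul_assoc, hhf0]
      have h2 : joinList K S (F.map (iota K S)) * iota K S (h * f0)
          = iota K S (h * f0) := by
        apply joinList_mul_absorb
        · intro p hp q hq
          obtain ⟨fp, _, rfl⟩ := List.mem_map.1 hp
          obtain ⟨fq, hfq, rfl⟩ := List.mem_map.1 hq
          exact iota_comm_idem (hmem fp (by assumption)).1 (hmem fq hfq).1
        · refine ⟨iota K S f0, List.mem_map.2 ⟨f0, hf0F, rfl⟩, ?_⟩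
          rw [iota_mul]
          have : f0 * (h * f0) = h * f0 := by
            rw [← mul_assoc, idem_comm hhi hf0i, mul_assoc, hf0i]
          rw [this]
      rw [h1, h2, sub_self]

lemma tight_subset_singular : TightIdealSet K S ⊆ {x | Singular K S x} :=
  Set.sInter_subset_of_mem ⟨singularSet_ideal, tightGen_subset_singular⟩

end Aux

namespace Aux

section Fold

variable {S : Type*} [InverseSemigroup0 S]

/-- products distribute over foldl. -/
lemma mul_foldl (l : List S) : ∀ (u b : S),
    u * l.foldl (· * ·) b = l.foldl (· * ·) (u * b) := by
  induction l with
  | nil => intro u b; rfl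
  | cons a l ih =>
    intro u b
    show u * l.foldl (· * ·) (b * a) = l.foldl (· * ·) (u * b * a)
    rw [ih, mul_assoc]

variable {Λ : Finset S} (hΛ : ∀ a ∈ Λ, a * a = a)

include hΛ

lemma foldl_le (l : List S) : ∀ (t : S), (∀ a ∈ l, a ∈ Λ) →
    NatLe (l.foldl (· * ·) t) t := by
  induction l with
  | nil => intro t _; exact natLe_refl t
  | cons a l ih =>
    intro t hl
    have ha := hl a (List.mem_cons_self)
    have h1 : NatLe (l.foldl (· * ·) (t * a)) (t * a) :=
      ih (t * a) (fun b hb => hl b (List.mem_cons_of_mem a hb))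
    exact natLe_trans h1 (natLe_mul_idem t (hΛ a ha))

lemma foldl_perm {l l' : List S} (hp : l.Perm l') (hl : ∀ a ∈ l, a ∈ Λ) :
    ∀ t : S, l.foldl (· * ·) t = l'.foldl (· * ·) t := by
  induction hp with
  | nil => intro t; rfl
  | cons a p ih =>
    intro t
    exact ih (fun b hb => hl b (List.mem_cons_of_mem a hb)) (t * a)
  | swap a b l =>
    intro t
    show l.foldl (· * ·) (t * b * a) = l.foldl (· * ·) (t * a * b)
    have hab : b * a = a * b :=
      idem_comm (hΛ a (hl a (by simp))) (hΛ b (hl b (by simp)))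
    rw [mul_assoc, mul_assoc, hab]
  | trans p q ih1 ih2 =>
    intro t
    rw [ih1 hl t, ih2 (fun b hb => hl b (p.mem_iff.2 hb)) t]

lemma foldl_mem_absorb (l : List S) : ∀ (t a : S), a ∈ l → (∀ b ∈ l, b ∈ Λ) →
    l.foldl (· * ·) (t * a) = l.foldl (· * ·) t := by
  induction l with
  | nil => intro t a ha _; simp at ha
  | cons b l ih =>
    intro t a ha hl
    show l.foldl (· * ·) (t * a * b) = l.foldl (· * ·) (t * b)
    rcases List.mem_cons.1 ha with rfl | ha'
    · rw [mul_assoc, hΛ a (hl a ha)]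
    · -- a ∈ l
      have hab : a * b = b * a :=
        idem_comm (hΛ b (hl b (by simp))) (hΛ a (hl a ha))
      rw [mul_assoc, hab, ← mul_assoc]
      exact ih (t * b) a ha' (fun c hc => hl c (List.mem_cons_of_mem b hc))

/-- normal form: a fold of elements of `Λ` equals a fold over a subset of `Λ`. -/
lemma foldl_normalize (l : List S) : ∀ (t : S), (∀ a ∈ l, a ∈ Λ) →
    ∃ A : Finset S, A ⊆ Λ ∧ l.foldl (· * ·) t = A.toList.foldl (· * ·) t := by
  classical
  induction l with
  | nil => intro t _; exact ⟨∅, Finset.empty_subset _, by simp⟩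
  | cons a l ih =>
    intro t hl
    have ha : a ∈ Λ := hl a (List.mem_cons_self)
    obtain ⟨A', hA'sub, hA'⟩ :=
      ih (t * a) (fun b hb => hl b (List.mem_cons_of_mem a hb))
    by_cases haA : a ∈ A'
    · refine ⟨A', hA'sub, ?_⟩
      show l.foldl (· * ·) (t * a) = A'.toList.foldl (· * ·) t
      rw [hA']
      exact foldl_mem_absorb hΛ A'.toList t a (Finset.mem_toList.2 haA)
        (fun c hc => hA'sub (Finset.mem_toList.1 hc))
    · refine ⟨insert a A', Finset.insert_subset ha hA'sub, ?_⟩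
      show l.foldl (· * ·) (t * a) = (insert a A').toList.foldl (· * ·) t
      have hperm : ((insert a A').toList).Perm (a :: A'.toList) :=
        Finset.toList_insert haA
      rw [foldl_perm hΛ hperm
        (fun c hc => by
          rcases Finset.mem_insert.1 (Finset.mem_toList.1 hc) with rfl | h
          · exact ha
          · exact hA'sub h) t]
      exact hA' 

end Fold

end Aux

namespace Aux

section Omega

variable {S : Type*} [InverseSemigroup0 S]

/-- the universe generated by `T` and the idempotents `Λ`. -/
def OmegaSet (T Λ : Finset S) : Set S :=
  {u | ∃ t ∈ T, ∃ l : List S, (∀ a ∈ l, a ∈ Λ) ∧ u = l.foldl (· * ·) t}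

variable {T Λ : Finset S} (hΛ : ∀ a ∈ Λ, a * a = a)

lemma mem_omega_of_mem {t : S} (ht : t ∈ T) : t ∈ OmegaSet T Λ :=
  ⟨t, ht, [], by simp, rfl⟩

lemma omega_foldl {u : S} (hu : u ∈ OmegaSet T Λ) (l : List S)
    (hl : ∀ a ∈ l, a ∈ Λ) : l.foldl (· * ·) u ∈ OmegaSet T Λ := by
  obtain ⟨t, ht, l0, hl0, rfl⟩ := hu
  refine ⟨t, ht, l0 ++ l, ?_, ?_⟩
  · intro a ha
    rcases List.mem_append.1 ha with h | h
    · exact hl0 a h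
    · exact hl a h
  · rw [List.foldl_append]

lemma omega_mul_lam {u a : S} (hu : u ∈ OmegaSet T Λ) (ha : a ∈ Λ) :
    u * a ∈ OmegaSet T Λ :=
  omega_foldl hu [a] (by simpa using ha)

include hΛ in
lemma foldl_dd (l : List S) : ∀ t : S, (∀ a ∈ l, a ∈ Λ) →
    ∃ l' : List S, (∀ a ∈ l', a ∈ Λ) ∧
      star (l.foldl (· * ·) t) * (l.foldl (· * ·) t)
        = l'.foldl (· * ·) (star t * t) := by
  induction l using List.reverseRecOn with
  | nil => intro t _; exact ⟨[], by simp, rfl⟩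
  | append_singleton l a ih =>
    intro t hl
    have ha : a ∈ Λ := hl a (by simp)
    have haa := hΛ a ha
    obtain ⟨l', hl', hdd⟩ := ih t (fun b hb => hl b (by simp [hb]))
    set w₀ := l.foldl (· * ·) t with hw₀
    refine ⟨l' ++ [a], ?_, ?_⟩
    · intro b hb
      rcases List.mem_append.1 hb with h | h
      · exact hl' b h
      · simp at h; subst h; exact ha
    · rw [List.foldl_append, List.foldl_append]
      show star (w₀ * a) * (w₀ * a) = (l'.foldl (· * ·) (star t * t)) * a
      rw [← hdd]
      calc star (w₀ * a) * (w₀ * a)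
          = (star a * star w₀) * (w₀ * a) := by rw [star_mul]
        _ = star a * ((star w₀ * w₀) * a) := by simp only [mul_assoc]
        _ = a * ((star w₀ * w₀) * a) := by rw [star_of_idem haa]
        _ = (a * (star w₀ * w₀)) * a := by simp only [mul_assoc]
        _ = ((star w₀ * w₀) * a) * a := by
              rw [idem_comm (star_mul_self_idem w₀) haa]
        _ = (star w₀ * w₀) * (a * a) := by simp only [mul_assoc]
        _ = star w₀ * w₀ * a := by rw [haa]

include hΛ in
lemma omega_mul_dd (hΛT : ∀ t ∈ T, star t * t ∈ Λ) {u w : S}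
    (hu : u ∈ OmegaSet T Λ) (hw : w ∈ OmegaSet T Λ) :
    u * (star w * w) ∈ OmegaSet T Λ := by
  obtain ⟨t, ht, l, hl, rfl⟩ := hw
  obtain ⟨l', hl', hdd⟩ := foldl_dd hΛ l t hl
  rw [hdd, mul_foldl]
  exact omega_foldl (omega_mul_lam hu (hΛT t ht)) l' hl'

include hΛ in
lemma omega_finite : (OmegaSet T Λ).Finite := by
  classical
  apply Set.Finite.subset
    (Finset.finite_toSet ((T ×ˢ Λ.powerset).image
      fun p => p.2.toList.foldl (· * ·) p.1))
  rintro u ⟨t, ht, l, hl, rfl⟩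
  obtain ⟨A, hA, hnorm⟩ := foldl_normalize hΛ l t hl
  simp only [Finset.coe_image, Set.mem_image, Finset.mem_coe, Finset.mem_product]
  exact ⟨(t, A), ⟨ht, Finset.mem_powerset.2 hA⟩, hnorm.symm⟩

include hΛ in
lemma omega_le {u : S} (hu : u ∈ OmegaSet T Λ) : ∃ t ∈ T, NatLe u t := by
  obtain ⟨t, ht, l, hl, rfl⟩ := hu
  exact ⟨t, ht, foldl_le hΛ l t hl⟩

include hΛ in
/-- the meet property of `Ω`. -/
lemma omega_meet (F : S → S → Finset S)
    (hΛT : ∀ t ∈ T, star t * t ∈ Λ)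
    (hΛF : ∀ t ∈ T, ∀ t' ∈ T, ∀ f ∈ F t t', star f * f ∈ Λ)
    (hF : ∀ s t : S, ∀ y : S, (NatLe y s ∧ NatLe y t) ↔ ∃ f ∈ F s t, NatLe y f)
    {u v : S} (hu : u ∈ OmegaSet T Λ) (hv : v ∈ OmegaSet T Λ) :
    ∃ M : Finset S, ↑M ⊆ OmegaSet T Λ ∧
      ∀ y : S, (NatLe y u ∧ NatLe y v) ↔ ∃ w ∈ M, NatLe y w := by
  classical
  have hu' := hu
  have hv' := hv
  obtain ⟨t, ht, l, hl, hurep⟩ := hu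
  obtain ⟨t', ht', l', hl', hvrep⟩ := hv
  have hut : NatLe u t := by rw [hurep]; exact foldl_le hΛ l t hl
  have hvt' : NatLe v t' := by rw [hvrep]; exact foldl_le hΛ l' t' hl'
  refine ⟨(F t t').image (fun f => u * (star f * f) * (star v * v)), ?_, ?_⟩
  · intro w hw
    simp only [Finset.coe_image, Set.mem_image, Finset.mem_coe] at hw
    obtain ⟨f, hf, rfl⟩ := hw
    refine omega_mul_dd hΛ hΛT (omega_mul_lam hu' ?_) hv' 
    exact hΛF t ht t' ht' f hf
  · intro y
    constructor
    · rintro ⟨hyu, hyv⟩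
      have hyt : NatLe y t := natLe_trans hyu hut
      have hyt' : NatLe y t' := natLe_trans hyv hvt'
      obtain ⟨f, hf, hyf⟩ := (hF t t' y).1 ⟨hyt, hyt'⟩
      refine ⟨u * (star f * f) * (star v * v),
        Finset.mem_image.2 ⟨f, hf, rfl⟩, ?_⟩
      exact le_glue (le_glue hyu hyf) hyv
    · rintro ⟨w, hw, hyw⟩
      obtain ⟨f, hf, rfl⟩ := Finset.mem_image.1 hw
      obtain ⟨hft, hft'⟩ := (hF t t' f).2 ⟨f, hf, natLe_refl f⟩
      have h1 : NatLe (u * (star f * f)) u := natLe_mul_idem u (star_mul_self_idem f)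
      have hwleu : NatLe (u * (star f * f) * (star v * v)) u :=
        natLe_trans (natLe_mul_idem _ (star_mul_self_idem v)) h1
      have h2 : NatLe (u * (star f * f)) f := le_mul_dd_of_le hut hft
      have hwlev : NatLe (u * (star f * f) * (star v * v)) v :=
        le_mul_dd_of_le (natLe_trans h2 hft') hvt'
      exact ⟨natLe_trans hyw hwleu, natLe_trans hyw hwlev⟩

end Omega

end Aux

namespace Aux

section MainPrep

variable {K S : Type*} [CommRing K] [InverseSemigroup0 S]

open scoped Classical

lemma tight_zero_mem : (0 : Kzero K S) ∈ TightIdealSet K S :=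
  Set.mem_sInter.2 fun _ hJ => hJ.1.1

lemma tight_add_mem {a b : Kzero K S} (ha : a ∈ TightIdealSet K S)
    (hb : b ∈ TightIdealSet K S) : a + b ∈ TightIdealSet K S :=
  Set.mem_sInter.2 fun J hJ =>
    hJ.1.2.1 a (Set.mem_sInter.1 ha J hJ) b (Set.mem_sInter.1 hb J hJ)

lemma tight_mul_left_mem {a : Kzero K S} (ha : a ∈ TightIdealSet K S)
    (x : Kzero K S) : x * a ∈ TightIdealSet K S :=
  Set.mem_sInter.2 fun J hJ => (hJ.1.2.2.2 a (Set.mem_sInter.1 ha J hJ) x).1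

lemma tightGen_subset_tight : TightGen K S ⊆ TightIdealSet K S :=
  fun _ hx => Set.mem_sInter.2 fun _ hJ => hJ.2 hx

/-- elements supported strictly below `s₀` inside `Ω`. -/
def Nset (Ω : Set S) (s₀ : S) : Set (Kzero K S) :=
  {n | ∃ r : MonoidAlgebra K S, n = mk0 K S r ∧
      ∀ v ∈ r.support, v = 0 ∨ (v ∈ Ω ∧ NatLe v s₀ ∧ v ≠ s₀)}

lemma Nset_zero (Ω : Set S) (s₀ : S) : (0 : Kzero K S) ∈ Nset Ω s₀ :=
  ⟨0, mk0_zero.symm, by simp⟩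

lemma Nset_add {Ω : Set S} {s₀ : S} {a b : Kzero K S}
    (ha : a ∈ Nset Ω s₀) (hb : b ∈ Nset Ω s₀) : a + b ∈ Nset Ω s₀ := by
  obtain ⟨r1, rfl, h1⟩ := ha
  obtain ⟨r2, rfl, h2⟩ := hb
  refine ⟨r1 + r2, (mk0_add r1 r2).symm, ?_⟩
  intro v hv
  rcases Finset.mem_union.1 (Finsupp.support_add hv) with h | h
  · exact h1 v h
  · exact h2 v h

lemma Nset_sub {Ω : Set S} {s₀ : S} {a b : Kzero K S}
    (ha : a ∈ Nset Ω s₀) (hb : b ∈ Nset Ω s₀) : a - b ∈ Nset Ω s₀ := by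
  obtain ⟨r1, rfl, h1⟩ := ha
  obtain ⟨r2, rfl, h2⟩ := hb
  refine ⟨r1 - r2, (mk0_sub r1 r2).symm, ?_⟩
  intro v hv
  have : r1 v - r2 v ≠ 0 := by
    intro h0
    apply Finsupp.mem_support_iff.1 hv
    rw [ma_sub_apply, h0]
  by_cases hv1 : v ∈ r1.support
  · exact h1 v hv1
  · refine h2 v (Finsupp.mem_support_iff.2 ?_)
    intro h0
    apply this
    rw [Finsupp.notMem_support_iff.1 hv1, h0, sub_zero]

/-- key expansion: multiplying a single below `s₀` into a join of tight
idempotents lands in `Nset`. -/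
lemma L1 {Ω : Set S} (hclose : ∀ u ∈ Ω, ∀ w ∈ Ω, u * (star w * w) ∈ Ω)
    {s₀ : S} (l : List S)
    (hl : ∀ d ∈ l, ∃ w, w ∈ Ω ∧ NatLe w s₀ ∧ w ≠ s₀ ∧ d = star w * w) :
    ∀ v (c' : K), (v = 0 ∨ (v ∈ Ω ∧ NatLe v s₀)) →
      mk0 K S (MonoidAlgebra.single v c') * joinList K S (l.map (iota K S))
        ∈ Nset Ω s₀ := by
  induction l with
  | nil =>
    intro v c' _
    show mk0 K S (MonoidAlgebra.single v c') * (0 : Kzero K S) ∈ Nset Ω s₀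
    rw [mul_zero]
    exact Nset_zero Ω s₀
  | cons d l ih =>
    intro v c' hv
    rcases hv with rfl | ⟨hvΩ, hvle⟩
    · rw [mk0_single_zero, zero_mul]
      exact Nset_zero Ω s₀
    obtain ⟨w, hwΩ, hwle, hwne, rfl⟩ := hl _ (List.mem_cons_self)
    have hlrest := fun d hd => hl d (List.mem_cons_of_mem _ hd)
    have hvd_le_w : NatLe (v * (star w * w)) w := le_mul_dd_of_le hvle hwle
    have hvdΩ : v * (star w * w) ∈ Ω := hclose v hvΩ w hwΩ
    have hvdle : NatLe (v * (star w * w)) s₀ := natLe_trans hvd_le_w hwle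
    have hvdne : v * (star w * w) ≠ s₀ := by
      intro h0
      apply hwne
      apply natLe_antisymm hwle
      rw [← h0]
      exact hvd_le_w
    set J := joinList K S (l.map (iota K S)) with hJ
    have hexp : joinList K S ((star w * w :: l).map (iota K S))
        = iota K S (star w * w) + J - iota K S (star w * w) * J := rfl
    rw [hexp]
    rw [mul_sub, mul_add, ← mul_assoc]
    rw [mk0_single_mul_iota]
    have t1 : mk0 K S (MonoidAlgebra.single (v * (star w * w)) c') ∈ Nset Ω s₀ := by
      refine ⟨_, rfl, ?_⟩
      intro u hu
      have := Finsupp.support_single_subset hu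
      rw [Finset.mem_singleton] at this
      subst this
      exact Or.inr ⟨hvdΩ, hvdle, hvdne⟩
    have t2 : mk0 K S (MonoidAlgebra.single v c') * J ∈ Nset Ω s₀ :=
      ih hlrest v c' (Or.inr ⟨hvΩ, hvle⟩)
    have t3 : mk0 K S (MonoidAlgebra.single (v * (star w * w)) c') * J ∈ Nset Ω s₀ :=
      ih hlrest _ c' (Or.inr ⟨hvdΩ, hvdle⟩)
    exact Nset_sub (Nset_add t1 t2) t3

/-- the decomposition of a single times a tight generator. -/
lemma ygen_decomp {Ω : Set S} (hclose : ∀ u ∈ Ω, ∀ w ∈ Ω, u * (star w * w) ∈ Ω)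
    {s₀ : S} (hs₀ : s₀ ∈ Ω) (D : List S)
    (hD : ∀ d ∈ D, ∃ w, w ∈ Ω ∧ NatLe w s₀ ∧ w ≠ s₀ ∧ d = star w * w) (c : K) :
    ∃ n ∈ Nset Ω s₀,
      mk0 K S (MonoidAlgebra.single s₀ c) *
        (iota K S (star s₀ * s₀) - joinList K S (D.map (iota K S)))
      = mk0 K S (MonoidAlgebra.single s₀ c) - n := by
  refine ⟨mk0 K S (MonoidAlgebra.single s₀ c) * joinList K S (D.map (iota K S)),
    L1 hclose D hD s₀ c (Or.inr ⟨hs₀, natLe_refl s₀⟩), ?_⟩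
  rw [mul_sub, mk0_single_mul_iota, mul_dd]

/-- building the cover datum `D`. -/
lemma build_D {Ω : Set S}
    (hmeet : ∀ u ∈ Ω, ∀ v ∈ Ω, ∃ M : Finset S, ↑M ⊆ Ω ∧
      ∀ y : S, (NatLe y u ∧ NatLe y v) ↔ ∃ w ∈ M, NatLe y w)
    {s₀ : S} (hs₀ : s₀ ∈ Ω) (Tf : Finset S) :
    ↑Tf ⊆ Ω → (∀ t ∈ Tf, NatLe s₀ t → False) →
    ∃ D : List S,
      (∀ d ∈ D, ∃ w, w ∈ Ω ∧ w ≠ 0 ∧ NatLe w s₀ ∧ w ≠ s₀ ∧ d = star w * w) ∧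
      (∀ t ∈ Tf, ∀ z : S, NatLe z s₀ → NatLe z t → z ≠ 0 →
        ∃ d ∈ D, ∃ w, d = star w * w ∧ NatLe z w) := by
  induction Tf using Finset.induction with
  | empty =>
    intro _ _
    exact ⟨[], by simp, by simp⟩
  | @insert t Tf' htn ih =>
    intro hTf hmax
    obtain ⟨D', hD'1, hD'2⟩ := ih
      (fun u hu => hTf (Finset.mem_insert_of_mem hu))
      (fun u hu => hmax u (Finset.mem_insert_of_mem hu))
    obtain ⟨M, hMsub, hMiff⟩ := hmeet s₀ hs₀ t (hTf (Finset.mem_insert_self t Tf'))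
    refine ⟨((M.toList.filter (fun w => w ≠ 0)).map (fun w => star w * w)) ++ D',
      ?_, ?_⟩
    · intro d hd
      rcases List.mem_append.1 hd with h | h
      · obtain ⟨w, hw, rfl⟩ := List.mem_map.1 h
        have hw' := List.mem_filter.1 hw
        have hwM : w ∈ M := Finset.mem_toList.1 hw'.1
        have hwz : w ≠ 0 := by simpa using hw'.2
        obtain ⟨hws₀, hwt⟩ := (hMiff w).2 ⟨w, hwM, natLe_refl w⟩
        refine ⟨w, hMsub hwM, hwz, hws₀, ?_, rfl⟩
        rintro rfl
        exact hmax t (Finset.mem_insert_self t Tf') hwt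
      · exact hD'1 d h
    · intro t'' ht'' z hzs hzt hz0
      rcases Finset.mem_insert.1 ht'' with rfl | h
      · obtain ⟨w, hwM, hzw⟩ := (hMiff z).1 ⟨hzs, hzt⟩
        have hwz : w ≠ 0 := natLe_ne_zero hz0 hzw
        refine ⟨star w * w, List.mem_append.2 (Or.inl ?_), w, rfl, hzw⟩
        exact List.mem_map.2 ⟨w, List.mem_filter.2
          ⟨Finset.mem_toList.2 hwM, by simpa using hwz⟩, rfl⟩
      · obtain ⟨d, hd, w, hww, hzw⟩ := hD'2 t'' h z hzs hzt hz0
        exact ⟨d, List.mem_append.2 (Or.inr hd), w, hww, hzw⟩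

end MainPrep

end Aux

namespace Aux

section Measure

variable {K S : Type*} [CommRing K] [InverseSemigroup0 S]

open scoped Classical

noncomputable def rankF (Ωs : Finset S) (s : S) : ℕ :=
  (Ωs.filter (fun w => NatLe w s ∧ w ≠ s)).card

noncomputable def muF (Ωs : Finset S) (x : Kzero K S) : ℕ :=
  ∑ s ∈ (Phi x).support, (Ωs.card + 1) ^ rankF Ωs s

lemma sum_union_le {α : Type*} (A B : Finset α) (f : α → ℕ) :
    ∑ a ∈ A ∪ B, f a ≤ ∑ a ∈ A, f a + ∑ a ∈ B, f a := by
  classical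
  rw [← Finset.union_sdiff_self_eq_union, Finset.sum_union Finset.disjoint_sdiff]
  exact Nat.add_le_add_left (Finset.sum_le_sum_of_subset (Finset.sdiff_subset)) _

lemma rank_lt {Ωs : Finset S} {w s₀ : S} (hw : w ∈ Ωs) (hle : NatLe w s₀)
    (hne : w ≠ s₀) : rankF Ωs w < rankF Ωs s₀ := by
  apply Finset.card_lt_card
  constructor
  · intro v hv
    have hv' := Finset.mem_filter.1 hv
    refine Finset.mem_filter.2 ⟨hv'.1, natLe_trans hv'.2.1 hle, ?_⟩
    rintro rfl
    exact hne (natLe_antisymm hle hv'.2.1)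
  · intro hsub
    have hwmem : w ∈ Ωs.filter (fun v => NatLe v s₀ ∧ v ≠ s₀) :=
      Finset.mem_filter.2 ⟨hw, hle, hne⟩
    have := Finset.mem_filter.1 (hsub hwmem)
    exact this.2.2 rfl

lemma mu_decrease {Ωs : Finset S} {x' y : Kzero K S} {s₀ : S}
    (hs₀ : s₀ ∈ (Phi y).support)
    (hsub : (Phi x').support ⊆ ((Phi y).support.erase s₀)
      ∪ (Ωs.filter (fun w => NatLe w s₀ ∧ w ≠ s₀))) :
    muF Ωs x' < muF Ωs y := by
  set N := Ωs.card + 1 with hN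
  set Fl := Ωs.filter (fun w => NatLe w s₀ ∧ w ≠ s₀) with hFl
  have hNpos : 0 < N := Nat.succ_pos _
  have h1 : muF Ωs x' ≤ ∑ s ∈ ((Phi y).support.erase s₀) ∪ Fl, N ^ rankF Ωs s :=
    Finset.sum_le_sum_of_subset hsub
  have h2 : ∑ s ∈ ((Phi y).support.erase s₀) ∪ Fl, N ^ rankF Ωs s
      ≤ (∑ s ∈ (Phi y).support.erase s₀, N ^ rankF Ωs s)
        + ∑ s ∈ Fl, N ^ rankF Ωs s := sum_union_le _ _ _
  have h3 : ∑ s ∈ Fl, N ^ rankF Ωs s < N ^ rankF Ωs s₀ := by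
    by_cases hfe : Fl = ∅
    · rw [hfe, Finset.sum_empty]
      exact pow_pos hNpos _
    · obtain ⟨w₀, hw₀⟩ := Finset.nonempty_of_ne_empty hfe
      have hrkpos : 1 ≤ rankF Ωs s₀ := by
        have : Fl.card ≤ rankF Ωs s₀ := le_of_eq rfl
        have hcard : 0 < Fl.card := Finset.card_pos.2 ⟨w₀, hw₀⟩
        omega
      have hstep : ∀ w ∈ Fl, N ^ rankF Ωs w ≤ N ^ (rankF Ωs s₀ - 1) := by
        intro w hw
        have hw' := Finset.mem_filter.1 hw
        exact Nat.pow_le_pow_right hNpos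
          (by have := rank_lt (Ωs := Ωs) hw'.1 hw'.2.1 hw'.2.2; omega)
      calc ∑ s ∈ Fl, N ^ rankF Ωs s ≤ ∑ _s ∈ Fl, N ^ (rankF Ωs s₀ - 1) :=
            Finset.sum_le_sum hstep
        _ = Fl.card * N ^ (rankF Ωs s₀ - 1) := by rw [Finset.sum_const, smul_eq_mul]
        _ ≤ Ωs.card * N ^ (rankF Ωs s₀ - 1) :=
            Nat.mul_le_mul_right _ (Finset.card_filter_le _ _)
        _ < N * N ^ (rankF Ωs s₀ - 1) :=
            (Nat.mul_lt_mul_right (pow_pos hNpos _)).2 (by omega)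
        _ = N ^ rankF Ωs s₀ := by
            rw [← pow_succ']
            congr 1
            omega
  have h4 : (∑ s ∈ (Phi y).support.erase s₀, N ^ rankF Ωs s) + N ^ rankF Ωs s₀
      = muF Ωs y := Finset.sum_erase_add _ _ hs₀
  omega

lemma mu_eq_zero_support {Ωs : Finset S} {y : Kzero K S} (h : muF Ωs y = 0) :
    (Phi y).support = ∅ := by
  by_contra hne
  obtain ⟨s, hs⟩ := Finset.nonempty_of_ne_empty hne
  have h1 : (Ωs.card + 1) ^ rankF Ωs s
      ≤ ∑ u ∈ (Phi y).support, (Ωs.card + 1) ^ rankF Ωs u :=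
    Finset.single_le_sum (f := fun u => (Ωs.card + 1) ^ rankF Ωs u)
      (fun _ _ => Nat.zero_le _) hs
  have h2 : 0 < (Ωs.card + 1) ^ rankF Ωs s := pow_pos (Nat.succ_pos _) _
  unfold muF at h
  omega

end Measure

end Aux

namespace Aux

variable {K S : Type*} [CommRing K] [InverseSemigroup0 S]

lemma ma_zero_apply (s : S) : (0 : MonoidAlgebra K S) s = 0 := rfl

theorem singular_mem_tight (hH : HausdorffIS S)
    {x : Kzero K S} (hx : Singular K S x) : x ∈ TightIdealSet K S := by
  classical
  choose F hFeq using hH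
  have hF' : ∀ s t y : S, (NatLe y s ∧ NatLe y t) ↔ ∃ f ∈ F s t, NatLe y f :=
    fun s t y => Set.ext_iff.1 (hFeq s t) y
  set T : Finset S := (Phi x).support with hT
  set base : Finset S := T ∪ T.biUnion (fun t => T.biUnion (fun t' => F t t'))
    with hbase
  set Λ : Finset S := base.image (fun w => star w * w) with hΛdef
  have hΛ : ∀ a ∈ Λ, a * a = a := by
    intro a ha
    obtain ⟨w, _, rfl⟩ := Finset.mem_image.1 ha
    exact star_mul_self_idem w
  have hΛT : ∀ t ∈ T, star t * t ∈ Λ := fun t ht =>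
    Finset.mem_image.2 ⟨t, Finset.mem_union_left _ ht, rfl⟩
  have hΛF : ∀ t ∈ T, ∀ t' ∈ T, ∀ f ∈ F t t', star f * f ∈ Λ := by
    intro t ht t' ht' f hf
    refine Finset.mem_image.2 ⟨f, Finset.mem_union_right _ ?_, rfl⟩
    exact Finset.mem_biUnion.2 ⟨t, ht, Finset.mem_biUnion.2 ⟨t', ht', hf⟩⟩
  have hfin : (OmegaSet T Λ).Finite := omega_finite hΛ
  set Ωs : Finset S := hfin.toFinset with hΩsdef
  have hmemΩs : ∀ u : S, u ∈ Ωs ↔ u ∈ OmegaSet T Λ := fun u => hfin.mem_toFinset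
  have hclose : ∀ u ∈ OmegaSet T Λ, ∀ w ∈ OmegaSet T Λ,
      u * (star w * w) ∈ OmegaSet T Λ :=
    fun u hu w hw => omega_mul_dd hΛ hΛT hu hw
  have hmeet : ∀ u ∈ OmegaSet T Λ, ∀ v ∈ OmegaSet T Λ, ∃ M : Finset S,
      ↑M ⊆ OmegaSet T Λ ∧ ∀ y, (NatLe y u ∧ NatLe y v) ↔ ∃ w ∈ M, NatLe y w :=
    fun u hu v hv => omega_meet hΛ F hΛT hΛF hF' hu hv
  have main : ∀ n : ℕ, ∀ y : Kzero K S, Singular K S y →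
      ↑(Phi y).support ⊆ OmegaSet T Λ → muF Ωs y ≤ n →
      y ∈ TightIdealSet K S := by
    intro n
    induction n with
    | zero =>
      intro y _ _ hmu
      have hs := mu_eq_zero_support (Ωs := Ωs) (Nat.le_zero.1 hmu)
      rw [(Phi_eq_zero_iff y).1 (MonoidAlgebra.coeff_eq_zero.1 (Finsupp.support_eq_empty.1 hs))]
      exact tight_zero_mem
    | succ n ih =>
      intro y hy hysupp hmu
      by_cases hempty : (Phi y).support = ∅
      · rw [(Phi_eq_zero_iff y).1 (MonoidAlgebra.coeff_eq_zero.1 (Finsupp.support_eq_empty.1 hempty))]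
        exact tight_zero_mem
      obtain ⟨s₀, hs₀mem, hs₀max⟩ :=
        exists_max _ (Finset.nonempty_of_ne_empty hempty)
      have hs₀Ω : s₀ ∈ OmegaSet T Λ := hysupp hs₀mem
      have hs₀ne : s₀ ≠ (0 : S) := by
        rintro rfl
        exact (Finsupp.mem_support_iff.1 hs₀mem) (Phi_apply_zero y)
      have he₀i : (star s₀ * s₀) * (star s₀ * s₀) = star s₀ * s₀ :=
        star_mul_self_idem s₀
      have he₀z : star s₀ * s₀ ≠ 0 := by
        intro h0
        exact hs₀ne (by rw [← mul_dd s₀, h0, mulz])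
      obtain ⟨D, hD1, hD2⟩ := build_D hmeet hs₀Ω ((Phi y).support.erase s₀)
        (fun t ht => hysupp (Finset.mem_of_mem_erase ht))
        (fun t ht hle =>
          (Finset.mem_erase.1 ht).1 (hs₀max t (Finset.mem_of_mem_erase ht) hle))
      have hcover : IsCover S (star s₀ * s₀) D := by
        constructor
        · intro d hd
          obtain ⟨w, hwΩ, hwz, hwle, hwne, rfl⟩ := hD1 d hd
          refine ⟨star_mul_self_idem w, ?_, natLe_dd hwle⟩
          intro h0
          exact hwz (by rw [← mul_dd w, h0, mulz])
        · intro h hhi hhz hhle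
          by_contra hcon
          push_neg at hcon
          obtain ⟨g, hgi, hgz, hgle, hgann⟩ := hy h hhi hhz
          have hge₀ : NatLe g (star s₀ * s₀) := natLe_trans hgle hhle
          have hz : s₀ * g ≠ 0 := smul_ne_zero hgi hge₀ hgz
          have hzz : star (s₀ * g) * (s₀ * g) = g := dd_of_le_dd hgi hge₀
          have h0 : er0 (Phi y * MonoidAlgebra.single g (1 : K)) = 0 := by
            rw [← mk0_eq_zero_iff, mk0_mul, mk0_Phi]
            exact hgann
          have h1 : (Phi y * MonoidAlgebra.single g (1 : K)) (s₀ * g) = 0 := by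
            rw [← er0_apply_ne _ hz, h0, ma_zero_apply]
          rw [mul_single_apply] at h1
          have honly : ∀ u ∈ (Phi y).support, u ≠ s₀ →
              (if u * g = s₀ * g then Phi y u * 1 else 0) = 0 := by
            intro u hu hune
            rw [if_neg]
            intro hug
            have hzle_s₀ : NatLe (s₀ * g) s₀ := natLe_mul_idem s₀ hgi
            have hzle_u : NatLe (s₀ * g) u := by
              rw [← hug]; exact natLe_mul_idem u hgi
            obtain ⟨d, hdD, w, hww, hzw⟩ := hD2 u
              (Finset.mem_erase.2 ⟨hune, hu⟩) (s₀ * g) hzle_s₀ hzle_u hz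
            have hgled : NatLe g d := by
              rw [hww, ← hzz]; exact natLe_dd hzw
            have hdi : d * d = d := by rw [hww]; exact star_mul_self_idem w
            have hgd : g * d = g := idem_le_absorb' hdi hgi hgled
            have hgh : g * h = g := idem_le_absorb' hhi hgi hgle
            apply hgz
            calc g = g * d := hgd.symm
              _ = (g * h) * d := by rw [hgh]
              _ = g * (h * d) := by rw [mul_assoc]
              _ = 0 := by rw [hcon d hdD, mulz]
          have hsum := Finset.sum_eq_single_of_mem s₀ hs₀mem honly
          rw [hsum, if_pos rfl, mul_one] at h1
          exact (Finsupp.mem_support_iff.1 hs₀mem) h1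
      have hgen : iota K S (star s₀ * s₀) - joinList K S (D.map (iota K S))
          ∈ TightGen K S :=
        ⟨star s₀ * s₀, D, he₀i, he₀z, hcover, rfl⟩
      set c : K := Phi y s₀ with hc
      obtain ⟨nn, hnn, hdecomp⟩ := ygen_decomp hclose hs₀Ω D
        (fun d hd => by
          obtain ⟨w, h1, _, h3, h4, h5⟩ := hD1 d hd
          exact ⟨w, h1, h3, h4, h5⟩) c
      set q : Kzero K S := mk0 K S (MonoidAlgebra.single s₀ c) *
        (iota K S (star s₀ * s₀) - joinList K S (D.map (iota K S))) with hq
      have hqtight : q ∈ TightIdealSet K S :=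
        tight_mul_left_mem (tightGen_subset_tight hgen) _
      have hqsing : Singular K S q :=
        singular_mul_left _ (tightGen_subset_singular hgen)
      set x' : Kzero K S := y - q with hx'def
      have hx'sing : Singular K S x' := by
        rw [hx'def, sub_eq_add_neg]
        exact singular_add hy (singular_neg hqsing)
      obtain ⟨r, hreq, hrprop⟩ := hnn
      have hPhiq : Phi q = MonoidAlgebra.single s₀ c - er0 r := by
        rw [hdecomp, hreq, Phi_sub, Phi_mk0, Phi_mk0, er0_single_ne hs₀ne]
      have hPhix' : Phi x' = Phi y - (MonoidAlgebra.single s₀ c - er0 r) := by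
        rw [hx'def, Phi_sub, hPhiq]
      have her0r : ∀ v ∈ (er0 r).support,
          v ∈ OmegaSet T Λ ∧ NatLe v s₀ ∧ v ≠ s₀ := by
        intro v hv
        have hv0 : v ≠ 0 := by
          rintro rfl
          exact (Finsupp.mem_support_iff.1 hv) (er0_apply_zero r)
        have hvr : v ∈ r.support := Finsupp.mem_support_iff.2 (by
          rw [← er0_apply_ne r hv0]
          exact Finsupp.mem_support_iff.1 hv)
        rcases hrprop v hvr with rfl | hok
        · exact absurd rfl hv0
        · exact hok
      have hval : ∀ v : S, Phi x' v = Phi y v -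
          ((MonoidAlgebra.single s₀ c : MonoidAlgebra K S) v - er0 r v) := by
        intro v
        rw [hPhix', ma_sub_apply, ma_sub_apply]
      have hsupp' : (Phi x').support ⊆ ((Phi y).support.erase s₀)
          ∪ (Ωs.filter (fun w => NatLe w s₀ ∧ w ≠ s₀)) := by
        intro v hv
        have hvval := Finsupp.mem_support_iff.1 hv
        by_cases hvs : v = s₀
        · exfalso
          apply hvval
          subst hvs
          have hrv : (er0 r) v = 0 := by
            by_cases hmem : v ∈ (er0 r).support
            · exact absurd rfl (her0r v hmem).2.2
            · exact Finsupp.notMem_support_iff.1 hmem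
          rw [hval v, hrv, MonoidAlgebra.coeff_single, Finsupp.single_eq_same, ← hc, sub_zero, sub_self]
        · have hsingle : (MonoidAlgebra.single s₀ c : MonoidAlgebra K S) v = 0 :=
            Finsupp.single_eq_of_ne (fun h => hvs h)
          by_cases hy1 : v ∈ (Phi y).support
          · exact Finset.mem_union.2 (Or.inl (Finset.mem_erase.2 ⟨hvs, hy1⟩))
          · have h2 : er0 r v ≠ 0 := by
              intro hrv
              apply hvval
              rw [hval v, hrv, hsingle, Finsupp.notMem_support_iff.1 hy1]
              ring
            have h3 := her0r v (Finsupp.mem_support_iff.2 h2)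
            exact Finset.mem_union.2 (Or.inr (Finset.mem_filter.2
              ⟨(hmemΩs v).2 h3.1, h3.2.1, h3.2.2⟩))
      have hx'supp : ↑(Phi x').support ⊆ OmegaSet T Λ := by
        intro v hv
        rcases Finset.mem_union.1 (hsupp' hv) with h | h
        · exact hysupp (Finset.mem_of_mem_erase h)
        · exact (hmemΩs v).1 (Finset.mem_filter.1 h).1
      have hmu' : muF Ωs x' < muF Ωs y := mu_decrease hs₀mem hsupp'
      have hx'tight := ih x' hx'sing hx'supp (by omega)
      have hyeq : y = x' + q := by rw [hx'def, sub_add_cancel]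
      rw [hyeq]
      exact tight_add_mem hx'tight hqtight
  exact main (muF Ωs x) x hx (fun t ht => mem_omega_of_mem ht) le_rfl

end Aux

/-- For a Hausdorff inverse semigroup with zero, the singular ideal of `K₀S`
coincides with the tight ideal, over any commutative unital ring `K`. -/
theorem stmt10 (K S : Type*) [CommRing K] [InverseSemigroup0 S] (hH : HausdorffIS S) :
    {x : Kzero K S | Singular K S x} = TightIdealSet K S := by
  apply Set.Subset.antisymm
  · intro x hx
    exact Aux.singular_mem_tight hH hx
  · exact Aux.tight_subset_singular
end
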